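/- arXiv:2201.06172 — 7 statements merged into one kernel-verified Lean document; each statement's English description precedes it below -/
import Mathlib

section
/- Let q be a prime power, let d be a positive integer, and let c ∈ GF(q) with c ≠ 1. Let N_4 denote the number of quadruples (x_1, x_2, x_3, x_4) ∈ GF(q)^4 satisfying x_1 − x_2 + x_3 − x_4 = 0 and x_1^d − c·x_2^d + c·x_3^d − x_4^d = 0. Then Σ_{i=0}^{q} i²·ω_i = (N_4 − 1)/(q − 1) − gcd(d, q − 1), where ω_i are the c-differential spectrum values of F(x) = x^d. -/
open Finset

/-- `cdelta F d c b` is the number of `x` in the finite field `F` with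
`(x+1)^d - c * x^d = b`, i.e. the entry `δ_c(b)` of the `c`-DDT of `x ↦ x^d`. -/
noncomputable def cdelta (F : Type*) [Field F] (d : ℕ) (c b : F) : ℕ :=
  Nat.card {x : F // (x + 1) ^ d - c * x ^ d = b}

/-- `comega F d c i` is the number of `b` in `F` with `δ_c(b) = i`,
i.e. the value `ω_i` of the `c`-differential spectrum of `x ↦ x^d`. -/
noncomputable def comega (F : Type*) [Field F] (d : ℕ) (c : F) (i : ℕ) : ℕ :=
  Nat.card {b : F // cdelta F d c b = i}

open scoped Classical in
/-- The quadratic character of `F`, valued in `ℤ`. -/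
noncomputable def chi (F : Type*) [Field F] (x : F) : ℤ :=
  if x = 0 then 0 else if IsSquare x then 1 else -1

open scoped Classical in
/-- The number of `d`-th roots of unity in a finite field is `gcd d (q-1)`. -/
lemma card_dth_roots (F : Type*) [Field F] [Fintype F] (d : ℕ) (hd : 0 < d) :
    #(Finset.univ.filter fun z : F => z ^ d = 1) = Nat.gcd d (Fintype.card F - 1) := by
  classical
  set e := Nat.gcd d (Fintype.card F - 1) with he_def
  have he : 0 < e := Nat.gcd_pos_of_pos_left _ hd
  have hiff : ∀ z : F, z ^ d = 1 ↔ z ^ e = 1 := by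
    intro z
    constructor
    · intro h
      have hz : z ≠ 0 := by
        intro h0
        rw [h0, zero_pow hd.ne'] at h
        exact zero_ne_one h
      set u : Fˣ := Units.mk0 z hz with hu
      have hud : u ^ d = 1 := by
        ext
        simpa [hu] using h
      have := (pow_gcd_eq_one (a := u) (m := d) (n := Fintype.card Fˣ)).mpr ⟨hud, pow_card_eq_one⟩
      rw [Fintype.card_units] at this
      have : (u : F) ^ e = 1 := by
        rw [← Units.val_pow_eq_pow_val, this, Units.val_one]
      simpa [hu] using this
    · intro h
      obtain ⟨k, hk⟩ : e ∣ d := Nat.gcd_dvd_left _ _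
      rw [hk, pow_mul, h, one_pow]
  have hset : (Finset.univ.filter fun z : F => z ^ d = 1)
      = Polynomial.nthRootsFinset e (1 : F) := by
    ext z
    simp [hiff z, Polynomial.mem_nthRootsFinset he]
  rw [hset]
  obtain ⟨g, hg⟩ := IsCyclic.exists_generator (α := Fˣ)
  have hord : orderOf g = Fintype.card Fˣ := by
    rw [orderOf_eq_card_of_forall_mem_zpowers hg, Nat.card_eq_fintype_card]
  have hprim : IsPrimitiveRoot (g : F) (Fintype.card F - 1) := by
    rw [← Fintype.card_units]
    exact IsPrimitiveRoot.coe_units_iff.mpr (hord ▸ IsPrimitiveRoot.orderOf g)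
  obtain ⟨m, hm⟩ : e ∣ Fintype.card F - 1 := Nat.gcd_dvd_right _ _
  have h1 : 1 < Fintype.card F := Fintype.one_lt_card
  have hprim2 : IsPrimitiveRoot ((g : F) ^ m) e :=
    hprim.pow (by omega) (by rw [hm, mul_comm])
  exact hprim2.card_nthRootsFinset

theorem stmt_1 (p n : ℕ) (hp : p.Prime) (hn : 1 ≤ n) (q : ℕ) (hq : q = p ^ n)
    (F : Type*) [Field F] [Fintype F] (hF : Fintype.card F = q)
    (d : ℕ) (hd : 0 < d) (c : F) (hc : c ≠ 1)
    (N4 : ℕ)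
    (hN4 : N4 = Nat.card {v : F × F × F × F //
      v.1 - v.2.1 + v.2.2.1 - v.2.2.2 = 0 ∧
      v.1 ^ d - c * v.2.1 ^ d + c * v.2.2.1 ^ d - v.2.2.2 ^ d = 0}) :
    ((∑ i ∈ Finset.range (q + 1), (i : ℤ) ^ 2 * comega F d c i) + Nat.gcd d (q - 1)) *
      ((q : ℤ) - 1) = (N4 : ℤ) - 1 := by
  classical
  have hq1 : 1 < q := hF ▸ Fintype.one_lt_card
  set Δ : F → F := fun x => (x + 1) ^ d - c * x ^ d with hΔ
  set δ : F → ℕ := fun b => #(Finset.univ.filter fun x : F => Δ x = b) with hδdef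
  have hcd : ∀ b, cdelta F d c b = δ b := by
    intro b
    rw [cdelta, Nat.card_eq_fintype_card, Fintype.card_subtype]
  have hcw : ∀ i, comega F d c i = #(Finset.univ.filter fun b : F => δ b = i) := by
    intro i
    rw [comega, Nat.card_eq_fintype_card, Fintype.card_subtype]
    congr 1
    ext b
    simp [hcd]
  set e := Nat.gcd d (q - 1) with he_def
  -- S : the sum of squares of δ
  set S : ℕ := ∑ b : F, (δ b) ^ 2 with hS_def
  -- Step 1 : the spectrum sum equals S
  have hδle : ∀ b : F, δ b ≤ q := by
    intro b
    calc δ b ≤ #(Finset.univ : Finset F) := Finset.card_filter_le _ _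
    _ = q := by rw [Finset.card_univ, hF]
  have step1 : ∑ i ∈ Finset.range (q + 1), i ^ 2 * comega F d c i = S := by
    rw [hS_def]
    rw [← Finset.sum_fiberwise_of_maps_to (g := δ) (t := Finset.range (q + 1))
      (fun b _ => Finset.mem_range.mpr (Nat.lt_succ_of_le (hδle b))) (fun b => (δ b) ^ 2)]
    refine Finset.sum_congr rfl fun i _ => ?_
    have h1 : ∑ b ∈ Finset.univ.filter (fun b : F => δ b = i), (δ b) ^ 2
        = ∑ _b ∈ Finset.univ.filter (fun b : F => δ b = i), i ^ 2 :=
      Finset.sum_congr rfl fun b hb => by rw [(Finset.mem_filter.mp hb).2]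
    rw [h1, Finset.sum_const, smul_eq_mul, hcw i, mul_comm]
  -- Step 2 : S = ∑_x δ (Δ x)
  have step2 : S = ∑ x : F, δ (Δ x) := by
    rw [hS_def, ← Finset.sum_fiberwise_of_maps_to (g := Δ) (t := Finset.univ)
      (fun x _ => Finset.mem_univ _) (fun x => δ (Δ x))]
    refine Finset.sum_congr rfl fun b _ => ?_
    have h1 : ∑ x ∈ Finset.univ.filter (fun x : F => Δ x = b), δ (Δ x)
        = ∑ _x ∈ Finset.univ.filter (fun x : F => Δ x = b), δ b :=
      Finset.sum_congr rfl fun x hx => by rw [(Finset.mem_filter.mp hx).2]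
    rw [h1, Finset.sum_const, smul_eq_mul, sq]
  -- N4 as a filtered count over triples
  set P : F → F → F → Prop := fun t x y => (x + t) ^ d - c * x ^ d = (y + t) ^ d - c * y ^ d
    with hP
  have hN4' : N4 = #(Finset.univ.filter fun w : F × F × F => P w.1 w.2.1 w.2.2) := by
    rw [hN4, ← Fintype.card_subtype, ← Nat.card_eq_fintype_card]
    refine Nat.card_eq_of_bijective (fun v => ⟨(v.1.1 - v.1.2.1, v.1.2.1, v.1.2.2.1), ?_⟩) ?_
    · obtain ⟨⟨x1, x2, x3, x4⟩, h1, h2⟩ := v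
      dsimp only at h1 h2
      simp only [P]
      have e1 : x2 + (x1 - x2) = x1 := by ring
      have e2 : x3 + (x1 - x2) = x4 := by linear_combination h1
      rw [e1, e2]
      linear_combination h2
    · constructor
      · rintro ⟨⟨a1, a2, a3, a4⟩, ha1, ha2⟩ ⟨⟨b1, b2, b3, b4⟩, hb1, hb2⟩ h
        dsimp only at ha1 ha2 hb1 hb2
        simp only [Subtype.mk.injEq, Prod.mk.injEq] at h ⊢
        obtain ⟨h1, h2, h3⟩ := h
        refine ⟨by linear_combination h1 + h2, h2, h3, ?_⟩
        have hha : a4 = a3 + (a1 - a2) := by linear_combination -ha1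
        have hhb : b4 = b3 + (b1 - b2) := by linear_combination -hb1
        rw [hha, hhb, h1, h3]
      · rintro ⟨⟨t, x, y⟩, hw⟩
        refine ⟨⟨(x + t, x, y, y + t), ⟨by dsimp only; ring, ?_⟩⟩, ?_⟩
        · simp only [P] at hw
          dsimp only
          linear_combination hw
        · simp
  -- split over t
  set A : F → ℕ := fun t => #(Finset.univ.filter fun pr : F × F => P t pr.1 pr.2) with hA
  have hsplit : N4 = ∑ t : F, A t := by
    rw [hN4']
    simp only [hA, Finset.card_filter]
    rw [Fintype.sum_prod_type]
  -- A t for t ≠ 0 equals S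
  have hAt : ∀ t : F, t ≠ 0 → A t = S := by
    intro t ht
    have htd : t ^ d ≠ 0 := pow_ne_zero _ ht
    rw [step2]
    simp only [hA]
    have : ∑ x : F, δ (Δ x) = ∑ x : F, #(Finset.univ.filter fun y : F => Δ x = Δ y) := by
      refine Finset.sum_congr rfl fun x _ => ?_
      simp only [hδdef]
      congr 1
      ext y
      simp [eq_comm]
    rw [this]
    rw [Finset.card_filter, Fintype.sum_prod_type]
    simp only [Finset.card_filter]
    -- change variables x ↦ x/t, y ↦ y/t  i.e. sum over u with x = t*u
    rw [← Equiv.sum_comp (Equiv.mulLeft₀ t ht) (fun x => ∑ y : F, if P t x y then 1 else 0)]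
    refine Finset.sum_congr rfl fun u _ => ?_
    rw [← Equiv.sum_comp (Equiv.mulLeft₀ t ht) (fun y => if P t _ y then 1 else 0)]
    refine Finset.sum_congr rfl fun v _ => ?_
    congr 1
    simp only [P, Equiv.mulLeft₀_apply, hΔ, eq_iff_iff]
    constructor
    · intro h
      have : t ^ d * ((u + 1) ^ d - c * u ^ d) = t ^ d * ((v + 1) ^ d - c * v ^ d) := by
        rw [mul_sub, mul_sub, ← mul_pow, ← mul_pow, mul_add, mul_one]
        rw [mul_left_comm (t ^ d) c, ← mul_pow, mul_left_comm (t^d) c, ← mul_pow]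
        rw [show t * u + t = t * u + t by ring] at h
        convert h using 2 <;> ring
      have := mul_left_cancel₀ htd this
      linear_combination this
    · intro h
      have h2 : t ^ d * ((u + 1) ^ d - c * u ^ d) = t ^ d * ((v + 1) ^ d - c * v ^ d) := by
        rw [h]
      calc (t * u + t) ^ d - c * (t * u) ^ d
          = t ^ d * ((u + 1) ^ d - c * u ^ d) := by
            rw [show t * u + t = t * (u + 1) by ring, mul_pow, mul_pow]; ring
        _ = t ^ d * ((v + 1) ^ d - c * v ^ d) := h2
        _ = (t * v + t) ^ d - c * (t * v) ^ d := by
            rw [show t * v + t = t * (v + 1) by ring, mul_pow, mul_pow]; ring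
  -- A 0
  have hA0 : A 0 = 1 + (q - 1) * e := by
    have hc1 : (1 : F) - c ≠ 0 := sub_ne_zero.mpr (Ne.symm hc)
    have hP0 : ∀ x y : F, P 0 x y ↔ x ^ d = y ^ d := by
      intro x y
      simp only [P, add_zero]
      constructor
      · intro h
        have : (1 - c) * x ^ d = (1 - c) * y ^ d := by linear_combination h
        exact mul_left_cancel₀ hc1 this
      · intro h
        rw [h]
    have : A 0 = ∑ x : F, #(Finset.univ.filter fun y : F => y ^ d = x ^ d) := by
      simp only [hA]
      rw [Finset.card_filter, Fintype.sum_prod_type]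
      refine Finset.sum_congr rfl fun x _ => ?_
      rw [Finset.card_filter]
      refine Finset.sum_congr rfl fun y _ => ?_
      congr 1
      simp only [eq_iff_iff, hP0 x y, eq_comm]
    rw [this]
    have hinner : ∀ x : F, x ≠ 0 → #(Finset.univ.filter fun y : F => y ^ d = x ^ d) = e := by
      intro x hx
      have hxd : x ^ d ≠ 0 := pow_ne_zero _ hx
      rw [he_def, ← hF, ← card_dth_roots F d hd]
      rw [Finset.card_filter, Finset.card_filter]
      rw [← Equiv.sum_comp (Equiv.mulLeft₀ x hx) (fun y => if y ^ d = x ^ d then 1 else 0)]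
      refine Finset.sum_congr rfl fun z _ => ?_
      congr 1
      simp only [Equiv.mulLeft₀_apply, eq_iff_iff, mul_pow]
      constructor
      · intro h
        have : x ^ d * z ^ d = x ^ d * 1 := by rw [mul_one]; linear_combination h
        exact mul_left_cancel₀ hxd this
      · intro h; rw [h, mul_one]
    have h0 : #(Finset.univ.filter fun y : F => y ^ d = (0 : F) ^ d) = 1 := by
      rw [zero_pow hd.ne']
      rw [show (Finset.univ.filter fun y : F => y ^ d = 0) = {0} by
        ext y; simp [pow_eq_zero_iff hd.ne']]
      simp
    rw [← Finset.add_sum_erase _ _ (Finset.mem_univ (0 : F)), h0]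
    congr 1
    rw [Finset.sum_congr rfl (fun x hx => hinner x (Finset.ne_of_mem_erase hx)),
      Finset.sum_const, smul_eq_mul]
    congr 1
    rw [Finset.card_erase_of_mem (Finset.mem_univ _), Finset.card_univ, hF]
  -- combine
  have hfin : N4 = 1 + (q - 1) * e + (q - 1) * S := by
    rw [hsplit, ← Finset.add_sum_erase _ _ (Finset.mem_univ (0 : F)), hA0]
    congr 1
    rw [Finset.sum_congr rfl (fun t ht => hAt t (Finset.ne_of_mem_erase ht)),
      Finset.sum_const, smul_eq_mul, Finset.card_erase_of_mem (Finset.mem_univ _),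
      Finset.card_univ, hF]
  have hsum : (∑ i ∈ Finset.range (q + 1), (i : ℤ) ^ 2 * comega F d c i)
      = (S : ℤ) := by
    rw [← step1]
    push_cast
    ring
  rw [hsum, hfin]
  have hq1' : (1 : ℤ) ≤ q := by exact_mod_cast hq1.le
  push_cast [Nat.cast_sub hq1.le]
  ring
end

section
/- Let n ≥ 1 and let F(x) = x^{2^n − 2} be the inverse power function over GF(2^n). Let c ∈ GF(2^n) with c ≠ 0 and c ≠ 1, and suppose that exactly one of Tr(c) and Tr(c^{-1}) equals 0 (i.e., Tr(c) = 1, Tr(c^{-1}) = 0 or Tr(c) = 0, Tr(c^{-1}) = 1), where Tr is the absolute trace from GF(2^n) to GF(2). Then the c-differential spectrum of F is given by ω_0 = 2^{n−1} − 1, ω_1 = 3, ω_2 = 2^{n−1} − 3, ω_3 = 1, and ω_i = 0 for i ≥ 4; in particular F is differentially (c,3)-uniform. -/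
open Finset

set_option linter.unusedSectionVars false

section Aux

variable {F : Type*} [Field F] [Fintype F] [DecidableEq F] [CharP F 2] [Algebra (ZMod 2) F]

local notation "Tr" => Algebra.trace (ZMod 2) F

lemma tr_sq (x : F) : Tr (x ^ 2) = Tr x := by
  let e : F ≃ₐ[ZMod 2] F :=
    { frobeniusEquiv F 2 with
      commutes' := fun r => by
        show frobenius F 2 (algebraMap (ZMod 2) F r) = algebraMap (ZMod 2) F r
        rw [frobenius_def, ← map_pow]
        congr 1
        revert r; decide }
  have h := Algebra.trace_eq_of_algEquiv e x
  have hx : e x = x ^ 2 := rfl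
  rw [hx] at h
  exact h

lemma tr_surj : ∃ u : F, Tr u = 1 := by
  haveI : PerfectField (ZMod 2) := PerfectRing.toPerfectField (ZMod 2) 2
  obtain ⟨u, hu⟩ := Algebra.trace_surjective (ZMod 2) F 1
  exact ⟨u, hu⟩

lemma as_card (a : F) :
    (univ.filter fun y : F => y ^ 2 + y = a).card = if Tr a = 0 then 2 else 0 := by
  have htwo : (2 : F) = 0 := CharTwo.two_eq_zero
  have hfib : ∀ y z : F, y ^ 2 + y = z ^ 2 + z ↔ y = z ∨ y = z + 1 := by
    intro y z
    constructor
    · intro h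
      have h2 : (y + z) * (y + z + 1) = 0 := by
        linear_combination h + (y * z + z ^ 2 + z) * htwo
      rcases mul_eq_zero.mp h2 with h' | h'
      · left; linear_combination h' - z * htwo
      · right; linear_combination h' - (z + 1) * htwo
    · rintro (rfl | rfl)
      · rfl
      · linear_combination (z + 1) * htwo
  have hcard2 : ∀ b : F, (∃ y : F, y ^ 2 + y = b) →
      (univ.filter fun y : F => y ^ 2 + y = b).card = 2 := by
    rintro b ⟨y0, hy0⟩
    have hset : (univ.filter fun y : F => y ^ 2 + y = b) = {y0, y0 + 1} := by
      ext y
      simp only [mem_filter, mem_univ, true_and, mem_insert, mem_singleton]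
      rw [← hy0, hfib]
    rw [hset, card_insert_of_notMem (by
      simp only [mem_singleton]
      intro h
      exact one_ne_zero (left_eq_add.mp h)), card_singleton]
  have htrψ : ∀ y : F, Tr (y ^ 2 + y) = 0 := by
    intro y
    rw [map_add, tr_sq]
    exact CharTwo.add_self_eq_zero _
  obtain ⟨u, hu⟩ := tr_surj (F := F)
  set ψ : F → F := fun y => y ^ 2 + y with hψ
  set I : Finset F := univ.image ψ with hI
  set T0 : Finset F := univ.filter fun b => Tr b = 0 with hT0
  have hIT : I ⊆ T0 := by
    intro b hb
    obtain ⟨y, -, rfl⟩ := mem_image.mp hb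
    exact mem_filter.mpr ⟨mem_univ _, htrψ y⟩
  have hqI : Fintype.card F = 2 * I.card := by
    rw [← card_univ,
      card_eq_sum_card_fiberwise (fun x _ => mem_image_of_mem ψ (mem_univ x)),
      Finset.sum_congr rfl fun b hb => hcard2 b (by
        obtain ⟨y, -, rfl⟩ := mem_image.mp hb; exact ⟨y, rfl⟩)]
    simp [mul_comm]
    rfl
  have hzmod : ∀ z : ZMod 2, z ≠ 0 → z = 1 := by decide
  have hqT : Fintype.card F = 2 * T0.card := by
    have hsplit := Finset.card_filter_add_card_filter_not
      (s := (univ : Finset F)) (p := fun b => Tr b = 0)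
    have hbij : (univ.filter fun b : F => ¬ Tr b = 0).card = T0.card := by
      apply card_nbij' (fun b => b + u) (fun b => b + u)
      · intro b hb
        have hb1 : Tr b = 1 := hzmod _ (mem_filter.mp hb).2
        refine mem_filter.mpr ⟨mem_univ _, ?_⟩
        rw [map_add, hb1, hu]
        decide
      · intro b hb
        have hb0 : Tr b = 0 := (mem_filter.mp hb).2
        refine mem_filter.mpr ⟨mem_univ _, ?_⟩
        rw [map_add, hb0, hu]
        decide
      · intro b _
        show b + u + u = b
        rw [add_assoc, CharTwo.add_self_eq_zero, add_zero]
      · intro b _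
        show b + u + u = b
        rw [add_assoc, CharTwo.add_self_eq_zero, add_zero]
    rw [← card_univ, ← hsplit, hbij]
    ring
  have hITeq : I = T0 := Finset.eq_of_subset_of_card_le hIT (by omega)
  by_cases h : Tr a = 0
  · rw [if_pos h]
    apply hcard2
    have : a ∈ I := hITeq ▸ mem_filter.mpr ⟨mem_univ _, h⟩
    obtain ⟨y, -, hy⟩ := mem_image.mp this
    exact ⟨y, hy⟩
  · rw [if_neg h, card_eq_zero, filter_eq_empty_iff]
    intro y _ hy
    exact h (hy ▸ htrψ y)

lemma sq_card (a : F) : (univ.filter fun x : F => x ^ 2 = a).card = 1 := by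
  have htwo : (2 : F) = 0 := CharTwo.two_eq_zero
  have hrc : ringChar F = 2 := ringChar.eq F 2
  obtain ⟨r, hr⟩ := FiniteField.isSquare_of_char_two hrc a
  rw [Finset.card_eq_one]
  refine ⟨r, ?_⟩
  ext x
  simp only [mem_filter, mem_univ, true_and, mem_singleton]
  constructor
  · intro h
    have h2 : (x + r) ^ 2 = 0 := by
      rw [CharTwo.add_sq, h, hr]
      linear_combination r ^ 2 * htwo
    have h3 : x + r = 0 := pow_eq_zero_iff (two_ne_zero) |>.mp h2
    linear_combination h3 - r * htwo
  · rintro rfl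
    rw [hr]; ring

lemma quad_card (p q : F) (hp : p ≠ 0) :
    (univ.filter fun x : F => x ^ 2 + p * x + q = 0).card
      = if Tr (q / p ^ 2) = 0 then 2 else 0 := by
  have htwo : (2 : F) = 0 := CharTwo.two_eq_zero
  have hp2 : (p : F) ^ 2 ≠ 0 := pow_ne_zero _ hp
  have key : ∀ x : F, (x ^ 2 + p * x + q = 0) ↔ ((x / p) ^ 2 + x / p = q / p ^ 2) := by
    intro x
    have h1 : ((x / p) ^ 2 + x / p) * p ^ 2 = x ^ 2 + x * p := by
      field_simp
    have h2 : q / p ^ 2 * p ^ 2 = q := div_mul_cancel₀ _ hp2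
    constructor
    · intro h
      rw [← mul_left_inj' hp2, h1, h2]
      linear_combination h - q * htwo
    · intro h
      rw [← mul_left_inj' hp2, h1, h2] at h
      linear_combination h + q * htwo
  rw [← as_card]
  apply card_nbij' (fun x => x / p) (fun y => y * p)
  · intro x hx
    exact mem_filter.mpr ⟨mem_univ _, (key x).mp (mem_filter.mp hx).2⟩
  · intro y hy
    refine mem_filter.mpr ⟨mem_univ _, (key (y * p)).mpr ?_⟩
    rw [mul_div_cancel_right₀ _ hp]
    exact (mem_filter.mp hy).2
  · intro x _
    exact div_mul_cancel₀ _ hp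
  · intro y _
    exact mul_div_cancel_right₀ _ hp

/-- The function `x ↦ (x+1)⁻¹ + c x⁻¹`. -/
def auxf {F : Type*} [Field F] (c : F) (x : F) : F := (x + 1)⁻¹ + c * x⁻¹

lemma add_one_ne_zero_char2 {x : F} (hx : x ≠ 1) : x + 1 ≠ 0 := by
  intro h
  exact hx (by linear_combination h - CharTwo.two_eq_zero (R := F))

lemma auxf_zero (c : F) : auxf c 0 = 1 := by simp [auxf]

lemma auxf_one (c : F) : auxf c 1 = c := by
  have h11 : (1 : F) + 1 = 0 := CharTwo.add_self_eq_zero 1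
  simp [auxf, h11]

lemma auxf_key (c : F) (b x : F) (hx0 : x ≠ 0) (hx1 : x ≠ 1) :
    auxf c x = b ↔ b * x ^ 2 + (b + c + 1) * x + c = 0 := by
  have htwo : (2 : F) = 0 := CharTwo.two_eq_zero
  have hx1' : x + 1 ≠ 0 := add_one_ne_zero_char2 hx1
  have hxx : x * (x + 1) ≠ 0 := mul_ne_zero hx0 hx1'
  have h1 : ((x + 1)⁻¹ + c * x⁻¹) * (x * (x + 1)) = x + c * (x + 1) := by
    field_simp
  unfold auxf
  rw [← mul_left_inj' hxx, h1]
  constructor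
  · intro h
    linear_combination -h + (c * x + x + c) * htwo
  · intro h
    linear_combination -h + (c * x + x + c) * htwo

lemma fiber_zero (c : F) (hc0 : c ≠ 0) (hc1 : c ≠ 1) :
    (univ.filter fun x : F => auxf c x = 0).card = 1 := by
  have htwo : (2 : F) = 0 := CharTwo.two_eq_zero
  have hc1' : c + 1 ≠ 0 := add_one_ne_zero_char2 hc1
  rw [card_eq_one]
  refine ⟨c / (c + 1), ?_⟩
  ext x
  simp only [mem_filter, mem_univ, true_and, mem_singleton]
  by_cases hx0 : x = 0
  · subst hx0
    rw [auxf_zero]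
    constructor
    · intro h; exact absurd h one_ne_zero
    · intro h
      rw [eq_comm, div_eq_zero_iff] at h
      rcases h with h | h
      · exact absurd h hc0
      · exact absurd h hc1'
  · by_cases hx1 : x = 1
    · subst hx1
      rw [auxf_one]
      constructor
      · intro h; exact absurd h hc0
      · intro h
        rw [eq_div_iff hc1'] at h
        exact absurd (show (1 : F) = 0 by linear_combination h) one_ne_zero
    · rw [auxf_key c 0 x hx0 hx1, eq_div_iff hc1']
      constructor
      · intro h
        linear_combination h - c * htwo
      · intro h
        linear_combination h + c * htwo

lemma fiber_cp1 (c : F) (hc0 : c ≠ 0) (hc1 : c ≠ 1) :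
    (univ.filter fun x : F => auxf c x = c + 1).card = 1 := by
  have htwo : (2 : F) = 0 := CharTwo.two_eq_zero
  have hc1' : c + 1 ≠ 0 := add_one_ne_zero_char2 hc1
  rw [← sq_card (F := F) (c / (c + 1))]
  congr 1
  ext x
  simp only [mem_filter, mem_univ, true_and]
  by_cases hx0 : x = 0
  · subst hx0
    rw [auxf_zero]
    constructor
    · intro h
      exact absurd (show c = 0 by linear_combination -h) hc0
    · intro h
      rw [show (0 : F) ^ 2 = 0 by ring, eq_comm, div_eq_zero_iff] at h
      rcases h with h | h
      · exact absurd h hc0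
      · exact absurd h hc1'
  · by_cases hx1 : x = 1
    · subst hx1
      rw [auxf_one]
      constructor
      · intro h
        exact absurd (show (1 : F) = 0 by linear_combination -h) one_ne_zero
      · intro h
        rw [one_pow, eq_div_iff hc1'] at h
        exact absurd (show (1 : F) = 0 by linear_combination h) one_ne_zero
    · rw [auxf_key c (c + 1) x hx0 hx1, eq_div_iff hc1']
      constructor
      · intro h
        linear_combination h - (c * x + x + c) * htwo
      · intro h
        linear_combination h + (c * x + x + c) * htwo

lemma fiber_one (c : F) (hc0 : c ≠ 0) (hc1 : c ≠ 1) :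
    (univ.filter fun x : F => auxf c x = 1).card
      = 1 + if Tr c⁻¹ = 0 then 2 else 0 := by
  have htwo : (2 : F) = 0 := CharTwo.two_eq_zero
  have hset : (univ.filter fun x : F => auxf c x = 1)
      = insert 0 (univ.filter fun x : F => x ^ 2 + c * x + c = 0) := by
    ext x
    simp only [mem_filter, mem_univ, true_and, mem_insert]
    by_cases hx0 : x = 0
    · subst hx0
      rw [auxf_zero]
      simp
    · by_cases hx1 : x = 1
      · subst hx1
        rw [auxf_one]
        constructor
        · intro h; exact absurd h hc1
        · rintro (h | h)
          · exact absurd h one_ne_zero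
          · exact absurd (show (1 : F) = 0 by linear_combination h - c * htwo) one_ne_zero
      · rw [auxf_key c 1 x hx0 hx1]
        constructor
        · intro h
          exact Or.inr (by linear_combination h - x * htwo)
        · rintro (h | h)
          · exact absurd h hx0
          · linear_combination h + x * htwo
  rw [hset, card_insert_of_notMem (by
      simp only [mem_filter, mem_univ, true_and]
      intro h
      exact hc0 (by linear_combination h)),
    quad_card c c hc0, show c / c ^ 2 = c⁻¹ by rw [sq, ← div_div, div_self hc0, one_div]]
  exact add_comm _ 1

lemma fiber_c (c : F) (hc0 : c ≠ 0) (hc1 : c ≠ 1) :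
    (univ.filter fun x : F => auxf c x = c).card
      = 1 + if Tr c = 0 then 2 else 0 := by
  have htwo : (2 : F) = 0 := CharTwo.two_eq_zero
  have hci : c⁻¹ ≠ 0 := inv_ne_zero hc0
  have hcc : c * c⁻¹ = 1 := mul_inv_cancel₀ hc0
  have hset : (univ.filter fun x : F => auxf c x = c)
      = insert 1 (univ.filter fun x : F => x ^ 2 + c⁻¹ * x + 1 = 0) := by
    ext x
    simp only [mem_filter, mem_univ, true_and, mem_insert]
    by_cases hx0 : x = 0
    · subst hx0
      rw [auxf_zero]
      constructor
      · intro h; exact absurd h.symm hc1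
      · rintro (h | h)
        · exact absurd h.symm one_ne_zero
        · exact absurd (show (1 : F) = 0 by linear_combination h) one_ne_zero
    · by_cases hx1 : x = 1
      · subst hx1
        rw [auxf_one]
        simp
      · rw [auxf_key c c x hx0 hx1]
        constructor
        · intro h
          refine Or.inr ?_
          linear_combination c⁻¹ * h - (x ^ 2 + 2 * x + 1) * hcc - x * htwo
        · rintro (h | h)
          · exact absurd h hx1
          · linear_combination c * h - x * hcc + c * x * htwo
  rw [hset, card_insert_of_notMem (by
      simp only [mem_filter, mem_univ, true_and]
      intro h
      exact hci (by linear_combination h - htwo)),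
    quad_card c⁻¹ 1 hci, show (1 : F) / (c⁻¹) ^ 2 = c ^ 2 by
      rw [one_div, ← inv_pow, inv_inv], tr_sq]
  exact add_comm _ 1

lemma fiber_gen (c : F) (hc0 : c ≠ 0) (hc1 : c ≠ 1) (b : F)
    (hb0 : b ≠ 0) (hb1 : b ≠ 1) (hbc : b ≠ c) (hbc1 : b ≠ c + 1) :
    (univ.filter fun x : F => auxf c x = b).card = 0 ∨
    (univ.filter fun x : F => auxf c x = b).card = 2 := by
  have htwo : (2 : F) = 0 := CharTwo.two_eq_zero
  have hbb : b * b⁻¹ = 1 := mul_inv_cancel₀ hb0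
  have hbc1' : b + c + 1 ≠ 0 := by
    intro h
    exact hbc1 (by linear_combination h - (c + 1) * htwo)
  have hset : (univ.filter fun x : F => auxf c x = b)
      = univ.filter fun x : F => x ^ 2 + ((b + c + 1) / b) * x + c / b = 0 := by
    ext x
    simp only [mem_filter, mem_univ, true_and]
    by_cases hx0 : x = 0
    · subst hx0
      rw [auxf_zero]
      constructor
      · intro h; exact absurd h.symm hb1
      · intro h
        rw [show (0 : F) ^ 2 + (b + c + 1) / b * 0 + c / b = c / b by ring,
          div_eq_zero_iff] at h
        rcases h with h | h
        · exact absurd h hc0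
        · exact absurd h hb0
    · by_cases hx1 : x = 1
      · subst hx1
        rw [auxf_one]
        constructor
        · intro h; exact absurd h.symm hbc
        · intro h
          exact absurd (show (1 : F) = 0 by
            linear_combination b * h - (b + 2 * c + 1) * hbb - (b + c) * htwo) one_ne_zero
      · rw [auxf_key c b x hx0 hx1]
        constructor
        · intro h
          linear_combination b⁻¹ * h - x ^ 2 * hbb
        · intro h
          linear_combination b * h - ((b + c + 1) * x + c) * hbb
  rw [hset, quad_card _ _ (div_ne_zero hbc1' hb0)]
  split
  · exact Or.inr rfl
  · exact Or.inl rfl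

lemma spectrum_helper {n : ℕ} (hn : 2 ≤ n) (hcard : Fintype.card F = 2 ^ n)
    (g : F → ℕ) (v0 v1 v2 v3 : F)
    (h01 : v0 ≠ v1) (h02 : v0 ≠ v2) (h03 : v0 ≠ v3)
    (h12 : v1 ≠ v2) (h13 : v1 ≠ v3) (h23 : v2 ≠ v3)
    (hg0 : g v0 = 1) (hg1 : g v1 = 1) (hg2 : g v2 = 1) (hg3 : g v3 = 3)
    (hgen : ∀ b : F, b ≠ v0 → b ≠ v1 → b ≠ v2 → b ≠ v3 → g b = 0 ∨ g b = 2)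
    (hsum : ∑ b : F, g b = Fintype.card F) :
    (univ.filter fun b : F => g b = 0).card = 2 ^ (n - 1) - 1 ∧
    (univ.filter fun b : F => g b = 1).card = 3 ∧
    (univ.filter fun b : F => g b = 2).card = 2 ^ (n - 1) - 3 ∧
    (univ.filter fun b : F => g b = 3).card = 1 ∧
    (∀ i, 4 ≤ i → (univ.filter fun b : F => g b = i).card = 0) ∧
    (∀ b, g b ≤ 3) := by
  set V : Finset F := insert v0 (insert v1 (insert v2 {v3})) with hV
  have hmemV : ∀ b : F, b ∈ V ↔ (b = v0 ∨ b = v1 ∨ b = v2 ∨ b = v3) := by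
    intro b; simp [hV]
  have hVcard : V.card = 4 := by
    rw [hV, card_insert_of_notMem (by simp [h01, h02, h03]),
      card_insert_of_notMem (by simp [h12, h13]),
      card_insert_of_notMem (by simp [h23]), card_singleton]
  set S : Finset F := univ \ V with hS
  have hmemS : ∀ b : F, b ∈ S ↔ (b ≠ v0 ∧ b ≠ v1 ∧ b ≠ v2 ∧ b ≠ v3) := by
    intro b
    rw [hS, mem_sdiff, hmemV b]
    simp [not_or]
  have hScard : S.card = 2 ^ n - 4 := by
    rw [hS, card_sdiff_of_subset (subset_univ V), card_univ, hcard, hVcard]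
  have hsumV : ∑ b ∈ V, g b = 6 := by
    rw [hV, sum_insert (by simp [h01, h02, h03]), sum_insert (by simp [h12, h13]),
      sum_insert (by simp [h23]), sum_singleton, hg0, hg1, hg2, hg3]
    norm_num
  set k := (S.filter fun b => g b = 2).card with hk
  set m := (S.filter fun b => g b = 0).card with hm
  have hfneg : S.filter (fun b => ¬ g b = 0) = S.filter fun b => g b = 2 := by
    apply filter_congr
    intro b hb
    obtain ⟨hb0, hb1, hb2, hb3⟩ := (hmemS b).mp hb
    obtain h | h := hgen b hb0 hb1 hb2 hb3 <;> simp [h]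
  have hkm : m + k = S.card := by
    rw [hm, hk, ← hfneg]
    exact card_filter_add_card_filter_not _
  have hsumS : ∑ b ∈ S, g b = 2 * k := by
    rw [← sum_filter_add_sum_filter_not S (fun b => g b = 0), hfneg]
    have e0 : ∑ b ∈ S.filter (fun b => g b = 0), g b = 0 :=
      sum_eq_zero fun b hb => (mem_filter.mp hb).2
    have e2 : ∑ b ∈ S.filter (fun b => g b = 2), g b = 2 * k := by
      rw [hk, mul_comm, ← smul_eq_mul, ← sum_const]
      exact sum_congr rfl fun b hb => (mem_filter.mp hb).2
    rw [e0, e2, zero_add]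
  have htotal : 2 ^ n = 6 + 2 * k := by
    rw [← hcard, ← hsum, ← sum_sdiff (subset_univ V), ← hS, hsumS, hsumV]
    omega
  have h2n : 2 ^ n = 2 * 2 ^ (n - 1) := by
    conv_lhs => rw [show n = (n - 1) + 1 by omega]
    rw [pow_succ]
    ring
  have hk' : k = 2 ^ (n - 1) - 3 := by omega
  have hm' : m = 2 ^ (n - 1) - 1 := by omega
  have hval : ∀ b, g b = 0 ∨ g b = 1 ∨ g b = 2 ∨ g b = 3 := by
    intro b
    by_cases h0 : b = v0
    · subst h0; simp [hg0]
    by_cases h1 : b = v1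
    · subst h1; simp [hg1]
    by_cases h2 : b = v2
    · subst h2; simp [hg2]
    by_cases h3 : b = v3
    · subst h3; simp [hg3]
    rcases hgen b h0 h1 h2 h3 with h | h <;> simp [h]
  have f0 : univ.filter (fun b : F => g b = 0) = S.filter fun b => g b = 0 := by
    ext b
    simp only [mem_filter, mem_univ, true_and]
    constructor
    · intro h
      refine ⟨(hmemS b).mpr ⟨?_, ?_, ?_, ?_⟩, h⟩ <;> rintro rfl <;> omega
    · exact fun h => h.2
  have f2 : univ.filter (fun b : F => g b = 2) = S.filter fun b => g b = 2 := by
    ext b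
    simp only [mem_filter, mem_univ, true_and]
    constructor
    · intro h
      refine ⟨(hmemS b).mpr ⟨?_, ?_, ?_, ?_⟩, h⟩ <;> rintro rfl <;> omega
    · exact fun h => h.2
  have f1 : univ.filter (fun b : F => g b = 1) = {v0, v1, v2} := by
    ext b
    simp only [mem_filter, mem_univ, true_and, mem_insert, mem_singleton]
    constructor
    · intro h
      by_contra hcon
      push_neg at hcon
      obtain ⟨n0, n1, n2⟩ := hcon
      by_cases h3 : b = v3
      · subst h3; omega
      · rcases hgen b n0 n1 n2 h3 with h' | h' <;> omega
    · rintro (rfl | rfl | rfl) <;> first | exact hg0 | exact hg1 | exact hg2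
  have f3 : univ.filter (fun b : F => g b = 3) = {v3} := by
    ext b
    simp only [mem_filter, mem_univ, true_and, mem_singleton]
    constructor
    · intro h
      by_contra hcon
      by_cases h0 : b = v0
      · subst h0; omega
      by_cases h1 : b = v1
      · subst h1; omega
      by_cases h2 : b = v2
      · subst h2; omega
      rcases hgen b h0 h1 h2 hcon with h' | h' <;> omega
    · rintro rfl; exact hg3
  refine ⟨?_, ?_, ?_, ?_, ?_, ?_⟩
  · rw [f0, ← hm, hm']
  · rw [f1, card_insert_of_notMem (by simp [h01, h02]),
      card_insert_of_notMem (by simp [h12]), card_singleton]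
  · rw [f2, ← hk, hk']
  · rw [f3, card_singleton]
  · intro i hi
    rw [card_eq_zero, filter_eq_empty_iff]
    intro b _
    have := hval b
    omega
  · intro b
    have := hval b
    omega

end Aux

theorem stmt_3 (n : ℕ) (hn : 1 ≤ n)
    (c : GaloisField 2 n) (hc0 : c ≠ 0) (hc1 : c ≠ 1)
    (htr : (Algebra.trace (ZMod 2) (GaloisField 2 n) c = 1 ∧
            Algebra.trace (ZMod 2) (GaloisField 2 n) c⁻¹ = 0) ∨
           (Algebra.trace (ZMod 2) (GaloisField 2 n) c = 0 ∧
            Algebra.trace (ZMod 2) (GaloisField 2 n) c⁻¹ = 1)) :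
    comega (GaloisField 2 n) (2 ^ n - 2) c 0 = 2 ^ (n - 1) - 1 ∧
    comega (GaloisField 2 n) (2 ^ n - 2) c 1 = 3 ∧
    comega (GaloisField 2 n) (2 ^ n - 2) c 2 = 2 ^ (n - 1) - 3 ∧
    comega (GaloisField 2 n) (2 ^ n - 2) c 3 = 1 ∧
    (∀ i, 4 ≤ i → comega (GaloisField 2 n) (2 ^ n - 2) c i = 0) ∧
    (∀ b, cdelta (GaloisField 2 n) (2 ^ n - 2) c b ≤ 3) ∧
    (∃ b, cdelta (GaloisField 2 n) (2 ^ n - 2) c b = 3) := by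
  classical
  letI : Fintype (GaloisField 2 n) := Fintype.ofFinite _
  rcases Nat.lt_or_ge n 2 with h1 | hn2
  · -- n = 1 : impossible since c ≠ 0, c ≠ 1 in a field with 2 elements
    exfalso
    have hn1 : n = 1 := by omega
    subst hn1
    have hcard2 : Fintype.card (GaloisField 2 1) = 2 := by
      rw [← Nat.card_eq_fintype_card, GaloisField.card 2 1 one_ne_zero]
      norm_num
    have huniv : ({0, 1} : Finset (GaloisField 2 1)) = univ := by
      apply eq_of_subset_of_card_le (subset_univ _)
      rw [card_univ, hcard2, card_insert_of_notMem (by simp), card_singleton]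
    have hc := mem_univ c
    rw [← huniv] at hc
    simp only [mem_insert, mem_singleton] at hc
    tauto
  · have htwo : (2 : GaloisField 2 n) = 0 := CharTwo.two_eq_zero
    have hcardF : Fintype.card (GaloisField 2 n) = 2 ^ n := by
      rw [← Nat.card_eq_fintype_card]
      exact GaloisField.card 2 n (by omega)
    have h4le : 4 ≤ 2 ^ n := by
      calc (4 : ℕ) = 2 ^ 2 := by norm_num
      _ ≤ 2 ^ n := Nat.pow_le_pow_right (by norm_num) hn2
    have hpow : ∀ x : GaloisField 2 n, x ^ (2 ^ n - 2) = x⁻¹ := by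
      intro x
      by_cases hx : x = 0
      · subst hx
        rw [zero_pow (by omega), inv_zero]
      · have h1 : x ^ (2 ^ n - 1) = 1 := by
          have := FiniteField.pow_card_sub_one_eq_one x hx
          rwa [hcardF] at this
        have h2 : x ^ (2 ^ n - 2) * x = 1 := by
          rw [← pow_succ, show 2 ^ n - 2 + 1 = 2 ^ n - 1 by omega, h1]
        rw [inv_eq_one_div]
        exact eq_div_of_mul_eq hx h2
    set g : GaloisField 2 n → ℕ :=
      fun b => (univ.filter fun x => auxf c x = b).card with hg
    have hpoint : ∀ b x : GaloisField 2 n,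
        ((x + 1) ^ (2 ^ n - 2) - c * x ^ (2 ^ n - 2) = b) ↔ auxf c x = b := by
      intro b x
      rw [hpow, hpow, CharTwo.sub_eq_add]
      rfl
    have hcd : ∀ b, cdelta (GaloisField 2 n) (2 ^ n - 2) c b = g b := by
      intro b
      unfold cdelta
      rw [Nat.card_eq_fintype_card]
      exact Fintype.card_of_subtype _ (fun x => by
        simp only [mem_filter, mem_univ, true_and, hpoint b x])
    have hco : ∀ i, comega (GaloisField 2 n) (2 ^ n - 2) c i
        = (univ.filter fun b => g b = i).card := by
      intro i
      unfold comega
      rw [Nat.card_eq_fintype_card]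
      exact Fintype.card_of_subtype _ (fun b => by
        simp only [mem_filter, mem_univ, true_and, hcd b])
    have hsum : ∑ b : GaloisField 2 n, g b = Fintype.card (GaloisField 2 n) := by
      rw [← card_univ]
      exact (card_eq_sum_card_fiberwise (fun x _ => mem_univ (auxf c x))).symm
    have hg0 : g 0 = 1 := fiber_zero c hc0 hc1
    have hgcp1 : g (c + 1) = 1 := fiber_cp1 c hc0 hc1
    have h01 : (0 : GaloisField 2 n) ≠ c + 1 := by
      intro h
      exact hc1 (by linear_combination -h - htwo)
    have h02 : (0 : GaloisField 2 n) ≠ c := Ne.symm hc0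
    have h03 : (0 : GaloisField 2 n) ≠ 1 := zero_ne_one
    have h12 : c + 1 ≠ c := fun h => one_ne_zero (by linear_combination h)
    have h12' : c + 1 ≠ 1 := fun h => hc0 (by linear_combination h)
    rcases htr with ⟨htc, htci⟩ | ⟨htc, htci⟩
    · -- Tr c = 1, Tr c⁻¹ = 0 : δ(1) = 3, δ(c) = 1
      have hgc : g c = 1 := by
        show (univ.filter fun x => auxf c x = c).card = 1
        rw [fiber_c c hc0 hc1, if_neg (by rw [htc]; exact one_ne_zero)]
      have hg1 : g 1 = 3 := by
        show (univ.filter fun x => auxf c x = 1).card = 3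
        rw [fiber_one c hc0 hc1, if_pos htci]
      obtain ⟨w0, w1, w2, w3, w4, w5⟩ :=
        spectrum_helper hn2 hcardF g 0 (c + 1) c 1 h01 h02 h03 h12 h12' hc1
          hg0 hgcp1 hgc hg1
          (fun b hb0 hb1 hb2 hb3 => fiber_gen c hc0 hc1 b hb0 hb3 hb2 hb1) hsum
      exact ⟨by rw [hco 0, w0], by rw [hco 1, w1], by rw [hco 2, w2], by rw [hco 3, w3],
        fun i hi => by rw [hco i, w4 i hi],
        fun b => by rw [hcd b]; exact w5 b,
        ⟨1, by rw [hcd 1]; exact hg1⟩⟩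
    · -- Tr c = 0, Tr c⁻¹ = 1 : δ(1) = 1, δ(c) = 3
      have hg1 : g 1 = 1 := by
        show (univ.filter fun x => auxf c x = 1).card = 1
        rw [fiber_one c hc0 hc1, if_neg (by rw [htci]; exact one_ne_zero)]
      have hgc : g c = 3 := by
        show (univ.filter fun x => auxf c x = c).card = 3
        rw [fiber_c c hc0 hc1, if_pos htc]
      obtain ⟨w0, w1, w2, w3, w4, w5⟩ :=
        spectrum_helper hn2 hcardF g 0 (c + 1) 1 c h01 h03 h02 h12'
          h12 (Ne.symm hc1)
          hg0 hgcp1 hg1 hgc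
          (fun b hb0 hb1 hb2 hb3 => fiber_gen c hc0 hc1 b hb0 hb2 hb3 hb1) hsum
      exact ⟨by rw [hco 0, w0], by rw [hco 1, w1], by rw [hco 2, w2], by rw [hco 3, w3],
        fun i hi => by rw [hco i, w4 i hi],
        fun b => by rw [hcd b]; exact w5 b,
        ⟨c, by rw [hcd c]; exact hgc⟩⟩
end

section
/- Let n ≥ 1 and let F(x) = x^{2^n − 2} be the inverse power function over GF(2^n). Let c ∈ GF(2^n) with c ≠ 0 and c ≠ 1, and suppose Tr(c) = Tr(c^{-1}) = 0, where Tr is the absolute trace from GF(2^n) to GF(2). Then the c-differential spectrum of F is given by ω_0 = 2^{n−1}, ω_1 = 2, ω_2 = 2^{n−1} − 4, ω_3 = 2, and ω_i = 0 for i ≥ 4; in particular F is differentially (c,3)-uniform. -/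
open Finset

open Finset

section AuxLemmas

variable {n : ℕ}

lemma tr_sq' (x : GaloisField 2 n) :
    Algebra.trace (ZMod 2) (GaloisField 2 n) (x ^ 2)
      = Algebra.trace (ZMod 2) (GaloisField 2 n) x := by
  let e : GaloisField 2 n ≃ₐ[ZMod 2] GaloisField 2 n :=
    AlgEquiv.ofRingEquiv (f := frobeniusEquiv (GaloisField 2 n) 2)
      (fun z => RingHom.congr_fun (Subsingleton.elim
        ((frobeniusEquiv (GaloisField 2 n) 2 : GaloisField 2 n ≃+* GaloisField 2 n).toRingHom.comp
          (algebraMap (ZMod 2) (GaloisField 2 n))) (algebraMap (ZMod 2) (GaloisField 2 n))) z)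
  have : x ^ 2 = e x := rfl
  rw [this, Algebra.trace_eq_of_algEquiv]

lemma artin_schreier' {a : GaloisField 2 n}
    (ha : Algebra.trace (ZMod 2) (GaloisField 2 n) a = 0) :
    ∃ y : GaloisField 2 n, y ^ 2 + y = a := by
  classical
  letI : Fintype (GaloisField 2 n) := Fintype.ofFinite _
  have hc : (2 : GaloisField 2 n) = 0 := CharTwo.two_eq_zero
  have hz2 : ∀ z : ZMod 2, z ≠ 0 → z = 1 := by decide
  set L : GaloisField 2 n → GaloisField 2 n := fun y => y ^ 2 + y with hL
  have himg : (univ.image L) ⊆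
      univ.filter (fun b => Algebra.trace (ZMod 2) (GaloisField 2 n) b = 0) := by
    intro b hb
    rw [Finset.mem_image] at hb
    obtain ⟨y, _, rfl⟩ := hb
    simp only [Finset.mem_filter, Finset.mem_univ, true_and, hL]
    rw [map_add, tr_sq']
    exact CharTwo.add_self_eq_zero _
  have hfib : ∀ b ∈ univ.image L, (univ.filter (fun y => L y = b)).card = 2 := by
    intro b hb
    rw [Finset.mem_image] at hb
    obtain ⟨y, _, rfl⟩ := hb
    have : (univ.filter (fun z => L z = L y)) = {y, y + 1} := by
      ext z
      simp only [Finset.mem_filter, Finset.mem_univ, true_and, Finset.mem_insert,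
        Finset.mem_singleton, hL]
      constructor
      · intro h
        have h2 : (z + y) * (z + y + 1) = 0 := by
          linear_combination h + (z * y + y ^ 2 + y) * hc
        rcases mul_eq_zero.mp h2 with h3 | h3
        · left; linear_combination h3 - y * hc
        · right; linear_combination h3 - (y + 1) * hc
      · rintro (rfl | rfl)
        · rfl
        · linear_combination (y + 1) * hc
    rw [this, Finset.card_insert_of_notMem (by
      simp only [Finset.mem_singleton]
      intro h
      have : (1 : GaloisField 2 n) = 0 := by linear_combination -h
      exact one_ne_zero this), Finset.card_singleton]
  have hcount : 2 * (univ.image L).card = Fintype.card (GaloisField 2 n) := by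
    have := Finset.card_eq_sum_card_fiberwise
      (fun x (_ : x ∈ (univ : Finset (GaloisField 2 n))) =>
        Finset.mem_image_of_mem L (Finset.mem_univ x))
    rw [Finset.card_univ] at this
    rw [this, Finset.sum_congr rfl hfib, Finset.sum_const, smul_eq_mul, mul_comm]
  obtain ⟨u, hu⟩ := Algebra.trace_surjective (ZMod 2) (GaloisField 2 n) 1
  have hker : 2 * (univ.filter
      (fun b => Algebra.trace (ZMod 2) (GaloisField 2 n) b = 0)).card
      = Fintype.card (GaloisField 2 n) := by
    have hbij : (univ.filter
          (fun b => Algebra.trace (ZMod 2) (GaloisField 2 n) b = 0)).card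
        = (univ.filter
          (fun b => ¬ Algebra.trace (ZMod 2) (GaloisField 2 n) b = 0)).card := by
      apply Finset.card_bij (fun b _ => b + u)
      · intro b hb
        simp only [Finset.mem_filter, Finset.mem_univ, true_and] at hb ⊢
        rw [map_add, hb, hu, zero_add]
        decide
      · intro b _ b' _ h
        exact add_right_cancel h
      · intro b hb
        simp only [Finset.mem_filter, Finset.mem_univ, true_and] at hb
        refine ⟨b + u, ?_, ?_⟩
        · simp only [Finset.mem_filter, Finset.mem_univ, true_and]
          rw [map_add, hz2 _ hb, hu]
          decide
        · rw [add_assoc, CharTwo.add_self_eq_zero, add_zero]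
    have := Finset.card_filter_add_card_filter_not
      (s := (univ : Finset (GaloisField 2 n)))
      (p := fun b => Algebra.trace (ZMod 2) (GaloisField 2 n) b = 0)
    rw [Finset.card_univ] at this
    omega
  have hle : (univ.filter
      (fun b => Algebra.trace (ZMod 2) (GaloisField 2 n) b = 0)).card
      ≤ (univ.image L).card := by omega
  have heq := Finset.eq_of_subset_of_card_le himg hle
  have ha' : a ∈ univ.image L := by
    rw [heq]
    simp only [Finset.mem_filter, Finset.mem_univ, true_and]
    exact ha
  rw [Finset.mem_image] at ha'
  obtain ⟨y, _, hy⟩ := ha'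
  exact ⟨y, hy⟩

variable [Fintype (GaloisField 2 n)]

open scoped Classical in
lemma quad_filter_eq' {A B C r : GaloisField 2 n} (hA : A ≠ 0)
    (hr : A * r ^ 2 + B * r + C = 0) :
    univ.filter (fun x => A * x ^ 2 + B * x + C = 0) = {r, r + B / A} := by
  have hc : (2 : GaloisField 2 n) = 0 := CharTwo.two_eq_zero
  set s := B / A with hs_def
  have hs : A * s = B := by rw [hs_def]; field_simp
  ext x
  simp only [Finset.mem_filter, Finset.mem_univ, true_and, Finset.mem_insert,
    Finset.mem_singleton]
  constructor
  · intro hx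
    have key : A * ((x + r) * (x + r + s)) = 0 := by
      linear_combination hx - hr + (x + r) * hs + (A * x * r + A * r ^ 2 + B * r) * hc
    rcases mul_eq_zero.mp key with h2 | h2
    · exact absurd h2 hA
    rcases mul_eq_zero.mp h2 with h3 | h3
    · left; linear_combination h3 - r * hc
    · right; linear_combination h3 - (r + s) * hc
  · rintro (rfl | rfl)
    · exact hr
    · linear_combination hr + s * hs + (A * r * s + B * s) * hc

open scoped Classical in
lemma quad_card_of_root' {A B C r : GaloisField 2 n} (hA : A ≠ 0) (hB : B ≠ 0)
    (hr : A * r ^ 2 + B * r + C = 0) :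
    (univ.filter (fun x => A * x ^ 2 + B * x + C = 0)).card = 2 := by
  rw [quad_filter_eq' hA hr, Finset.card_insert_of_notMem (by
    simp only [Finset.mem_singleton]
    intro h
    have h0 : B / A = 0 := by linear_combination -h
    rw [div_eq_zero_iff] at h0
    exact hB (h0.resolve_right hA)), Finset.card_singleton]

open scoped Classical in
lemma quad_card_aux' {A B C : GaloisField 2 n} (hA : A ≠ 0) (hB : B ≠ 0) :
    (univ.filter (fun x => A * x ^ 2 + B * x + C = 0)).card = 0 ∨
    (univ.filter (fun x => A * x ^ 2 + B * x + C = 0)).card = 2 := by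
  by_cases h : ∃ r : GaloisField 2 n, A * r ^ 2 + B * r + C = 0
  · obtain ⟨r, hr⟩ := h
    exact Or.inr (quad_card_of_root' hA hB hr)
  · left
    rw [Finset.card_eq_zero, Finset.filter_eq_empty_iff]
    intro x _
    exact fun hx => h ⟨x, hx⟩

end AuxLemmas

theorem stmt_4 (n : ℕ) (hn : 1 ≤ n)
    (c : GaloisField 2 n) (hc0 : c ≠ 0) (hc1 : c ≠ 1)
    (htrc : Algebra.trace (ZMod 2) (GaloisField 2 n) c = 0)
    (htrci : Algebra.trace (ZMod 2) (GaloisField 2 n) c⁻¹ = 0) :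
    comega (GaloisField 2 n) (2 ^ n - 2) c 0 = 2 ^ (n - 1) ∧
    comega (GaloisField 2 n) (2 ^ n - 2) c 1 = 2 ∧
    comega (GaloisField 2 n) (2 ^ n - 2) c 2 = 2 ^ (n - 1) - 4 ∧
    comega (GaloisField 2 n) (2 ^ n - 2) c 3 = 2 ∧
    (∀ i, 4 ≤ i → comega (GaloisField 2 n) (2 ^ n - 2) c i = 0) ∧
    (∀ b, cdelta (GaloisField 2 n) (2 ^ n - 2) c b ≤ 3) ∧
    (∃ b, cdelta (GaloisField 2 n) (2 ^ n - 2) c b = 3) := by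
  classical
  letI : Fintype (GaloisField 2 n) := Fintype.ofFinite _
  have hc2 : (2 : GaloisField 2 n) = 0 := CharTwo.two_eq_zero
  -- rule out n = 1
  have hn2 : 2 ≤ n := by
    rcases Nat.lt_or_ge n 2 with h | h
    · exfalso
      have hn1 : n = 1 := by omega
      subst hn1
      have hcard : Nat.card (GaloisField 2 1) = 2 := by
        have := GaloisField.card (p := 2) (n := 1) one_ne_zero
        simpa using this
      have h3 : ({0, 1, c} : Finset (GaloisField 2 1)).card = 3 := by
        rw [Finset.card_insert_of_notMem (by
            simp only [Finset.mem_insert, Finset.mem_singleton]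
            push_neg
            exact ⟨zero_ne_one, fun h => hc0 h.symm⟩),
          Finset.card_insert_of_notMem (by
            simp only [Finset.mem_singleton]
            exact fun h => hc1 h.symm),
          Finset.card_singleton]
      have hle := Finset.card_le_univ ({0, 1, c} : Finset (GaloisField 2 1))
      rw [h3, ← Nat.card_eq_fintype_card, hcard] at hle
      omega
    · exact h
  have hq : Fintype.card (GaloisField 2 n) = 2 ^ n := by
    rw [← Nat.card_eq_fintype_card]
    exact GaloisField.card (p := 2) (n := n) (by omega)
  have hqge : 4 ≤ 2 ^ n := by
    calc (4 : ℕ) = 2 ^ 2 := by norm_num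
    _ ≤ 2 ^ n := Nat.pow_le_pow_right (by norm_num) hn2
  -- the power map is inversion
  have hd : ∀ x : GaloisField 2 n, x ^ (2 ^ n - 2) = x⁻¹ := by
    intro x
    have harith : 2 ^ n - 2 ≠ 0 ∧ 2 ^ n - 2 + 1 = 2 ^ n - 1 := by
      revert hqge
      generalize (2 : ℕ) ^ n = q
      intro h
      omega
    rcases eq_or_ne x 0 with rfl | hx
    · rw [zero_pow harith.1, inv_zero]
    · have h1 : x ^ (Fintype.card (GaloisField 2 n) - 1) = 1 :=
        FiniteField.pow_card_sub_one_eq_one x hx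
      apply eq_inv_of_mul_eq_one_left
      rw [← pow_succ]
      rw [hq] at h1
      rw [harith.2, h1]
  -- basic distinctness facts
  have hcp0 : c + 1 ≠ 0 := fun h => hc1 (by linear_combination h - hc2)
  have hcp1 : c + 1 ≠ 1 := fun h => hc0 (by linear_combination h)
  have hci : c * c⁻¹ = 1 := mul_inv_cancel₀ hc0
  -- the key characterization of the differential equation
  have hkey : ∀ b x : GaloisField 2 n,
      ((x + 1) ^ (2 ^ n - 2) - c * x ^ (2 ^ n - 2) = b) ↔
      ((x = 0 ∧ b = 1) ∨ (x = 1 ∧ b = c) ∨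
        (x ≠ 0 ∧ x ≠ 1 ∧ b * x ^ 2 + (b + c + 1) * x + c = 0)) := by
    intro b x
    rw [hd, hd]
    by_cases hx0 : x = 0
    · subst hx0
      rw [zero_add, inv_one, inv_zero, mul_zero, sub_zero]
      constructor
      · intro h; exact Or.inl ⟨rfl, h.symm⟩
      · rintro (⟨-, rfl⟩ | ⟨h, -⟩ | ⟨h, -⟩)
        · rfl
        · exact absurd h zero_ne_one
        · exact absurd rfl h
    · by_cases hx1 : x = 1
      · subst hx1
        rw [one_add_one_eq_two, hc2, inv_zero, inv_one, mul_one, zero_sub, CharTwo.neg_eq]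
        constructor
        · intro h; exact Or.inr (Or.inl ⟨rfl, h.symm⟩)
        · rintro (⟨h, -⟩ | ⟨-, rfl⟩ | ⟨-, h, -⟩)
          · exact absurd h one_ne_zero
          · rfl
          · exact absurd rfl h
      · have hx1' : x + 1 ≠ 0 := fun h => hx1 (by linear_combination h - hc2)
        have hrepr : (x + 1)⁻¹ - c * x⁻¹ = (x - c * (x + 1)) / (x * (x + 1)) := by
          field_simp
        rw [hrepr, div_eq_iff (mul_ne_zero hx0 hx1')]
        simp only [hx0, hx1, false_and, false_or, ne_eq, not_false_eq_true, true_and]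
        constructor
        · intro h; linear_combination -h + x * hc2
        · intro h; linear_combination -h + x * hc2
  -- the solution-set function
  set S : GaloisField 2 n → Finset (GaloisField 2 n) :=
    fun b => univ.filter (fun x => (x + 1) ^ (2 ^ n - 2) - c * x ^ (2 ^ n - 2) = b)
    with hS_def
  have hcd : ∀ b, cdelta (GaloisField 2 n) (2 ^ n - 2) c b = (S b).card := by
    intro b
    unfold cdelta
    rw [Nat.card_eq_fintype_card, Fintype.card_subtype, hS_def]
  have homega : ∀ i, comega (GaloisField 2 n) (2 ^ n - 2) c i
      = (univ.filter (fun b => (S b).card = i)).card := by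
    intro i
    unfold comega
    rw [Nat.card_eq_fintype_card, Fintype.card_subtype]
    congr 1
    apply Finset.filter_congr
    intro b _
    rw [hcd b]
  -- δ(0) = 1
  have hδ0 : (S 0).card = 1 := by
    have hset : S 0 = {c / (c + 1)} := by
      rw [hS_def]
      ext x
      simp only [Finset.mem_filter, Finset.mem_univ, true_and, Finset.mem_singleton, hkey 0 x]
      constructor
      · rintro (⟨rfl, h⟩ | ⟨rfl, h⟩ | ⟨hx0, hx1, h⟩)
        · exact absurd h.symm one_ne_zero
        · exact absurd h.symm hc0
        · rw [eq_div_iff hcp0]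
          linear_combination h - c * hc2
      · rintro rfl
        refine Or.inr (Or.inr ⟨?_, ?_, ?_⟩)
        · intro h
          rw [div_eq_zero_iff] at h
          exact hc0 (h.resolve_right hcp0)
        · intro h
          rw [div_eq_one_iff_eq hcp0] at h
          exact one_ne_zero (α := GaloisField 2 n) (by linear_combination -h)
        · have hx : (c + 1) * (c / (c + 1)) = c := by field_simp
          linear_combination hx + c * hc2
    rw [hset, Finset.card_singleton]
  -- δ(1) = 3
  have h1B : (1 : GaloisField 2 n) + c + 1 ≠ 0 := fun h => hc0 (by linear_combination h - hc2)
  obtain ⟨y, hy⟩ := artin_schreier' htrci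
  have hr1 : 1 * (c * y) ^ 2 + (1 + c + 1) * (c * y) + c = 0 := by
    linear_combination c ^ 2 * hy + c * hci + (c * y + c) * hc2
  have hδ1 : (S 1).card = 3 := by
    have hset : S 1 = insert 0
        (univ.filter (fun x => 1 * x ^ 2 + (1 + c + 1) * x + c = 0)) := by
      rw [hS_def]
      ext x
      simp only [Finset.mem_filter, Finset.mem_univ, true_and, Finset.mem_insert, hkey 1 x]
      constructor
      · rintro (⟨rfl, -⟩ | ⟨rfl, h⟩ | ⟨hx0, hx1, h⟩)
        · exact Or.inl rfl
        · exact absurd h.symm hc1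
        · exact Or.inr h
      · rintro (rfl | h)
        · exact Or.inl ⟨rfl, by trivial⟩
        · refine Or.inr (Or.inr ⟨?_, ?_, h⟩)
          · rintro rfl
            exact hc0 (by linear_combination h)
          · rintro rfl
            exact one_ne_zero (α := GaloisField 2 n) (by linear_combination h - (c + 1) * hc2)
    rw [hset, Finset.card_insert_of_notMem (by
        simp only [Finset.mem_filter, Finset.mem_univ, true_and]
        intro h
        exact hc0 (by linear_combination h)),
      quad_card_of_root' one_ne_zero h1B hr1]
  -- δ(c) = 3
  have hcB : c + c + 1 ≠ 0 := fun h =>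
    one_ne_zero (α := GaloisField 2 n) (by linear_combination h - c * hc2)
  have htrc2 : Algebra.trace (ZMod 2) (GaloisField 2 n) (c ^ 2) = 0 := by
    rw [tr_sq']; exact htrc
  obtain ⟨y2, hy2⟩ := artin_schreier' htrc2
  have hrc : c * (y2 * c⁻¹) ^ 2 + (c + c + 1) * (y2 * c⁻¹) + c = 0 := by
    linear_combination c⁻¹ * hy2 + (c⁻¹ * y2 ^ 2 + c) * hci + (c * c⁻¹ * y2 + c) * hc2
  have hδc : (S c).card = 3 := by
    have hset : S c = insert 1
        (univ.filter (fun x => c * x ^ 2 + (c + c + 1) * x + c = 0)) := by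
      rw [hS_def]
      ext x
      simp only [Finset.mem_filter, Finset.mem_univ, true_and, Finset.mem_insert, hkey c x]
      constructor
      · rintro (⟨rfl, h⟩ | ⟨rfl, -⟩ | ⟨hx0, hx1, h⟩)
        · exact absurd h hc1
        · exact Or.inl rfl
        · exact Or.inr h
      · rintro (rfl | h)
        · exact Or.inr (Or.inl ⟨rfl, by trivial⟩)
        · refine Or.inr (Or.inr ⟨?_, ?_, h⟩)
          · rintro rfl
            exact hc0 (by linear_combination h)
          · rintro rfl
            exact one_ne_zero (α := GaloisField 2 n)
              (by linear_combination h - (2 * c) * hc2)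
    rw [hset, Finset.card_insert_of_notMem (by
        simp only [Finset.mem_filter, Finset.mem_univ, true_and]
        intro h
        exact one_ne_zero (α := GaloisField 2 n) (by linear_combination h - (2 * c) * hc2)),
      quad_card_of_root' hc0 hcB hrc]
  -- δ(c+1) = 1
  have hδcp : (S (c + 1)).card = 1 := by
    set s : GaloisField 2 n := (c / (c + 1)) ^ 2 ^ (n - 1) with hs_def
    have hexp : 2 ^ (n - 1) * 2 = Fintype.card (GaloisField 2 n) := by
      rw [hq, ← pow_succ]
      congr 1
      omega
    have hs2 : s ^ 2 = c / (c + 1) := by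
      rw [hs_def, ← pow_mul, hexp, FiniteField.pow_card]
    have hsa : (c + 1) * (c / (c + 1)) = c := by field_simp
    have hs0 : s ≠ 0 := by
      intro h
      have : c / (c + 1) = 0 := by rw [← hs2, h]; ring
      rw [div_eq_zero_iff] at this
      exact hc0 (this.resolve_right hcp0)
    have hs1 : s ≠ 1 := by
      intro h
      have : c / (c + 1) = 1 := by rw [← hs2, h]; ring
      rw [div_eq_one_iff_eq hcp0] at this
      exact one_ne_zero (α := GaloisField 2 n) (by linear_combination -this)
    have hroot : (c + 1) * s ^ 2 + (c + 1 + c + 1) * s + c = 0 := by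
      linear_combination (c + 1) * hs2 + hsa + (c * s + s + c) * hc2
    have hset : S (c + 1) = {s} := by
      rw [hS_def]
      ext x
      simp only [Finset.mem_filter, Finset.mem_univ, true_and, Finset.mem_singleton,
        hkey (c + 1) x]
      constructor
      · rintro (⟨rfl, h⟩ | ⟨rfl, h⟩ | ⟨hx0, hx1, h⟩)
        · exact absurd (by linear_combination h : c = 0) hc0
        · exact absurd (by linear_combination h : (1 : GaloisField 2 n) = 0) one_ne_zero
        · have hx2 : x ^ 2 = s ^ 2 := by
            rw [hs2, eq_div_iff hcp0]
            linear_combination h - (x * c + x + c) * hc2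
          have hxs : (x + s) ^ 2 = 0 := by
            rw [CharTwo.add_sq, hx2, CharTwo.add_self_eq_zero]
          have hxs0 : x + s = 0 := by
            exact pow_eq_zero_iff (n := 2) (by norm_num) |>.mp hxs
          linear_combination hxs0 - s * hc2
      · rintro rfl
        exact Or.inr (Or.inr ⟨hs0, hs1, hroot⟩)
    rw [hset, Finset.card_singleton]
  -- generic b
  have hgen : ∀ b : GaloisField 2 n, b ≠ 0 → b ≠ 1 → b ≠ c → b ≠ c + 1 →
      ((S b).card = 0 ∨ (S b).card = 2) := by
    intro b hb0 hb1 hbc hbcp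
    have hB : b + c + 1 ≠ 0 := fun h => hbcp (by linear_combination h - (c + 1) * hc2)
    have hset : S b = univ.filter (fun x => b * x ^ 2 + (b + c + 1) * x + c = 0) := by
      rw [hS_def]
      ext x
      simp only [Finset.mem_filter, Finset.mem_univ, true_and, hkey b x]
      constructor
      · rintro (⟨rfl, rfl⟩ | ⟨rfl, rfl⟩ | ⟨-, -, h⟩)
        · exact absurd rfl hb1
        · exact absurd rfl hbc
        · exact h
      · intro h
        refine Or.inr (Or.inr ⟨?_, ?_, h⟩)
        · rintro rfl
          exact hc0 (by linear_combination h)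
        · rintro rfl
          exact one_ne_zero (α := GaloisField 2 n) (by linear_combination h - (b + c) * hc2)
    rw [hset]
    exact quad_card_aux' hb0 hB
  -- total count
  have hsum : ∑ b : GaloisField 2 n, (S b).card = 2 ^ n := by
    have := Finset.card_eq_sum_card_fiberwise
      (f := fun x : GaloisField 2 n => (x + 1) ^ (2 ^ n - 2) - c * x ^ (2 ^ n - 2))
      (s := univ) (t := univ) (fun x _ => Finset.mem_univ _)
    rw [Finset.card_univ, hq] at this
    rw [hS_def]
    exact this.symm
  -- pairwise distinctness of the four special points
  have h01 : (0 : GaloisField 2 n) ≠ 1 := zero_ne_one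
  have h0c : (0 : GaloisField 2 n) ≠ c := fun h => hc0 h.symm
  have h0cp : (0 : GaloisField 2 n) ≠ c + 1 := fun h => hcp0 h.symm
  have h1c : (1 : GaloisField 2 n) ≠ c := fun h => hc1 h.symm
  have h1cp : (1 : GaloisField 2 n) ≠ c + 1 := fun h => hcp1 h.symm
  have hccp : c ≠ c + 1 := fun h =>
    one_ne_zero (α := GaloisField 2 n) (by linear_combination -h)
  have h0m : (0 : GaloisField 2 n) ∉ ({1, c, c + 1} : Finset (GaloisField 2 n)) := by
    simp only [Finset.mem_insert, Finset.mem_singleton]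
    push_neg
    exact ⟨h01, h0c, h0cp⟩
  have h1m : (1 : GaloisField 2 n) ∉ ({c, c + 1} : Finset (GaloisField 2 n)) := by
    simp only [Finset.mem_insert, Finset.mem_singleton]
    push_neg
    exact ⟨h1c, h1cp⟩
  have hcm : c ∉ ({c + 1} : Finset (GaloisField 2 n)) := by
    simp only [Finset.mem_singleton]
    exact hccp
  set Q : Finset (GaloisField 2 n) := {0, 1, c, c + 1} with hQ_def
  have hQcard : Q.card = 4 := by
    rw [hQ_def, Finset.card_insert_of_notMem h0m, Finset.card_insert_of_notMem h1m,
      Finset.card_insert_of_notMem hcm, Finset.card_singleton]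
  set T : Finset (GaloisField 2 n) := univ \ Q with hT_def
  have hmemT : ∀ b, b ∈ T ↔ (b ≠ 0 ∧ b ≠ 1 ∧ b ≠ c ∧ b ≠ c + 1) := by
    intro b
    rw [hT_def, Finset.mem_sdiff, hQ_def]
    simp only [Finset.mem_univ, true_and, Finset.mem_insert, Finset.mem_singleton]
    push_neg
    tauto
  have hQsum : ∑ b ∈ Q, (S b).card = 8 := by
    rw [hQ_def, Finset.sum_insert h0m, Finset.sum_insert h1m, Finset.sum_insert hcm,
      Finset.sum_singleton, hδ0, hδ1, hδc, hδcp]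
    norm_num
  have hTsum : ∑ b ∈ T, (S b).card + 8 = 2 ^ n := by
    rw [← hQsum, hT_def, Finset.sum_sdiff (Finset.subset_univ Q)]
    exact hsum
  have hT2 : ∀ b ∈ T, (S b).card = 0 ∨ (S b).card = 2 := by
    intro b hb
    rw [hmemT] at hb
    exact hgen b hb.1 hb.2.1 hb.2.2.1 hb.2.2.2
  have hTsum2 : ∑ b ∈ T, (S b).card
      = 2 * (T.filter (fun b => (S b).card = 2)).card := by
    rw [← Finset.sum_filter_add_sum_filter_not T (fun b => (S b).card = 2)]
    rw [Finset.sum_congr rfl (fun b hb => (Finset.mem_filter.mp hb).2),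
      Finset.sum_const, smul_eq_mul, mul_comm,
      Finset.sum_eq_zero (fun b hb => ?_), add_zero]
    rcases hT2 b (Finset.filter_subset _ _ hb) with h | h
    · exact h
    · exact absurd h (Finset.mem_filter.mp hb).2
  have hTcard : T.card = 2 ^ n - 4 := by
    rw [hT_def, Finset.card_sdiff_of_subset (Finset.subset_univ Q), Finset.card_univ, hq, hQcard]
  have hTsplit := Finset.card_filter_add_card_filter_not
    (s := T) (p := fun b => (S b).card = 2)
  have hpow2 : 2 ^ n = 2 * 2 ^ (n - 1) := by
    rw [← pow_succ']
    congr 1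
    omega
  have harith : ∀ M k2 k0 : ℕ, 2 * k2 + 8 = 2 * M → k2 + k0 = 2 * M - 4 →
      (k2 = M - 4 ∧ k0 = M) := by
    intro M k2 k0 h1 h2
    omega
  obtain ⟨hk2, hk0⟩ := harith (2 ^ (n - 1))
    (T.filter (fun b => (S b).card = 2)).card
    (T.filter (fun b => ¬(S b).card = 2)).card
    (by rw [← hTsum2, hTsum]; exact hpow2)
    (by rw [hTsplit, hTcard, hpow2])
  have hω2set : univ.filter (fun b => (S b).card = 2)
      = T.filter (fun b => (S b).card = 2) := by
    ext b
    simp only [Finset.mem_filter, Finset.mem_univ, true_and]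
    constructor
    · intro h
      refine ⟨(hmemT b).mpr ⟨?_, ?_, ?_, ?_⟩, h⟩
      · rintro rfl; rw [hδ0] at h; omega
      · rintro rfl; rw [hδ1] at h; omega
      · rintro rfl; rw [hδc] at h; omega
      · rintro rfl; rw [hδcp] at h; omega
    · exact fun h => h.2
  have hω0set : univ.filter (fun b => (S b).card = 0)
      = T.filter (fun b => ¬(S b).card = 2) := by
    ext b
    simp only [Finset.mem_filter, Finset.mem_univ, true_and]
    constructor
    · intro h
      refine ⟨(hmemT b).mpr ⟨?_, ?_, ?_, ?_⟩, by omega⟩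
      · rintro rfl; rw [hδ0] at h; omega
      · rintro rfl; rw [hδ1] at h; omega
      · rintro rfl; rw [hδc] at h; omega
      · rintro rfl; rw [hδcp] at h; omega
    · rintro ⟨hbT, h2⟩
      rcases hT2 b hbT with h | h
      · exact h
      · exact absurd h h2
  have hset3 : univ.filter (fun b => (S b).card = 3) = {1, c} := by
    ext b
    simp only [Finset.mem_filter, Finset.mem_univ, true_and, Finset.mem_insert,
      Finset.mem_singleton]
    constructor
    · intro h
      by_cases hb1 : b = 1
      · exact Or.inl hb1
      by_cases hbc : b = c
      · exact Or.inr hbc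
      exfalso
      by_cases hb0 : b = 0
      · rw [hb0, hδ0] at h; omega
      by_cases hbcp : b = c + 1
      · rw [hbcp, hδcp] at h; omega
      rcases hgen b hb0 hb1 hbc hbcp with h' | h' <;> omega
    · rintro (rfl | rfl)
      · exact hδ1
      · exact hδc
  have hset1 : univ.filter (fun b => (S b).card = 1) = {0, c + 1} := by
    ext b
    simp only [Finset.mem_filter, Finset.mem_univ, true_and, Finset.mem_insert,
      Finset.mem_singleton]
    constructor
    · intro h
      by_cases hb0 : b = 0
      · exact Or.inl hb0
      by_cases hbcp : b = c + 1
      · exact Or.inr hbcp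
      exfalso
      by_cases hb1 : b = 1
      · rw [hb1, hδ1] at h; omega
      by_cases hbc : b = c
      · rw [hbc, hδc] at h; omega
      rcases hgen b hb0 hb1 hbc hbcp with h' | h' <;> omega
    · rintro (rfl | rfl)
      · exact hδ0
      · exact hδcp
  have hle3 : ∀ b, (S b).card ≤ 3 := by
    intro b
    by_cases hb0 : b = 0
    · rw [hb0, hδ0]; omega
    by_cases hb1 : b = 1
    · rw [hb1, hδ1]
    by_cases hbc : b = c
    · rw [hbc, hδc]
    by_cases hbcp : b = c + 1
    · rw [hbcp, hδcp]; omega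
    rcases hgen b hb0 hb1 hbc hbcp with h | h <;> omega
  refine ⟨?_, ?_, ?_, ?_, ?_, ?_, ⟨1, ?_⟩⟩
  · rw [homega 0, hω0set]
    exact hk0
  · rw [homega 1, hset1, Finset.card_insert_of_notMem (by
      simp only [Finset.mem_singleton]; exact h0cp), Finset.card_singleton]
  · rw [homega 2, hω2set]
    exact hk2
  · rw [homega 3, hset3, Finset.card_insert_of_notMem (by
      simp only [Finset.mem_singleton]; exact h1c), Finset.card_singleton]
  · intro i hi
    rw [homega i, Finset.card_eq_zero, Finset.filter_eq_empty_iff]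
    intro b _
    have := hle3 b
    omega
  · intro b
    rw [hcd b]
    exact hle3 b
  · rw [hcd 1]
    exact hδ1
end

section
/- Let p be an odd prime, n ≥ 1, q = p^n, and let F(x) = x^{q − 2} be the inverse power function over GF(q). Let c ∈ GF(q) with c ∉ {0, 1, 4, 4^{-1}}. If χ(c² − 4c) = −1, χ(1 − 4c) = −1, and χ(c) = −1, then the c-differential spectrum of F is given by ω_0 = (q − 3)/2, ω_1 = 3, ω_2 = (q − 3)/2, and ω_i = 0 for i ≥ 3. -/
open Finset

section Aux
variable {F : Type*} [Field F] [Fintype F] [DecidableEq F]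

lemma pow_card_sub_two' (hq : 3 ≤ Fintype.card F) (x : F) :
    x ^ (Fintype.card F - 2) = x⁻¹ := by
  rcases eq_or_ne x 0 with rfl | hx
  · rw [zero_pow (by omega), inv_zero]
  · have h1 : x ^ (Fintype.card F - 1) = 1 := FiniteField.pow_card_sub_one_eq_one x hx
    have h2 : x ^ (Fintype.card F - 2) * x = 1 := by
      rw [← pow_succ, show Fintype.card F - 2 + 1 = Fintype.card F - 1 by omega, h1]
    exact eq_inv_of_mul_eq_one_left h2

lemma card_sq_eq' (htwo : (2:F) ≠ 0) (a : F) (ha : a ≠ 0) :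
    (univ.filter fun y : F => y ^ 2 = a).card = if IsSquare a then 2 else 0 := by
  split_ifs with h
  · obtain ⟨s, rfl⟩ := h
    have hs : s ≠ 0 := by rintro rfl; simp at ha
    have hset : (univ.filter fun y : F => y ^ 2 = s * s) = {s, -s} := by
      ext y
      simp only [mem_filter, mem_univ, true_and, mem_insert, mem_singleton]
      constructor
      · intro hy
        have hz : (y - s) * (y + s) = 0 := by linear_combination hy
        rcases mul_eq_zero.1 hz with h | h
        · exact Or.inl (sub_eq_zero.1 h)
        · exact Or.inr (eq_neg_of_add_eq_zero_left h)
      · rintro (rfl | rfl) <;> ring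
    rw [hset, card_insert_of_notMem, card_singleton]
    simp only [mem_singleton]
    intro h
    apply hs
    have h2 : 2 * s = 0 := by linear_combination h
    rcases mul_eq_zero.1 h2 with h' | h'
    · exact absurd h' htwo
    · exact h'
  · rw [card_eq_zero, filter_eq_empty_iff]
    intro y _ hy
    exact h ⟨y, by rw [← hy]; ring⟩

end Aux

set_option linter.unusedSectionVars false

section Main
variable {F : Type*} [Field F] [Fintype F] [DecidableEq F]
variable (c : F)

/-- The quadratic associated to the equation `(x+1)⁻¹ - c x⁻¹ = b`. -/
private abbrev Qd (b x : F) : F := b * x ^ 2 + (b + c - 1) * x + c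

private abbrev Dd (b : F) : F := (b + c - 1) ^ 2 - 4 * (b * c)

lemma fiber_iff (hc0 : c ≠ 0) (b x : F) (hb : b ≠ 0) :
    (x + 1)⁻¹ - c * x⁻¹ = b ↔
      (x = 0 ∧ b = 1) ∨ (x = -1 ∧ b = c) ∨ Qd c b x = 0 := by
  rcases eq_or_ne x 0 with rfl | hx
  · have hl : ((0:F) + 1)⁻¹ - c * (0:F)⁻¹ = 1 := by simp
    rw [hl]
    constructor
    · intro h; exact Or.inl ⟨rfl, h.symm⟩
    · rintro (⟨-, rfl⟩ | ⟨h0, -⟩ | hq)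
      · rfl
      · exact absurd (neg_eq_zero.mp h0.symm) one_ne_zero
      · exact absurd (by linear_combination hq : c = 0) hc0
  · rcases eq_or_ne x (-1) with rfl | hx1
    · have hl : ((-1:F) + 1)⁻¹ - c * (-1:F)⁻¹ = c := by norm_num
      rw [hl]
      constructor
      · intro h; exact Or.inr (Or.inl ⟨rfl, h.symm⟩)
      · rintro (⟨h0, -⟩ | ⟨-, rfl⟩ | hq)
        · exact absurd (neg_eq_zero.mp h0) one_ne_zero
        · rfl
        · exact absurd (by linear_combination hq : (1:F) = 0) one_ne_zero
    · have hx1' : x + 1 ≠ 0 := fun h => hx1 (by linear_combination h)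
      constructor
      · intro h
        refine Or.inr (Or.inr ?_)
        field_simp at h
        linear_combination -h
      · rintro (⟨rfl, -⟩ | ⟨rfl, -⟩ | h)
        · exact absurd rfl hx
        · exact absurd rfl hx1
        · field_simp
          linear_combination -h

lemma Dd_ne_zero (htwo : (2:F) ≠ 0) (hcns : ¬ IsSquare c) (b : F) : Dd c b ≠ 0 := by
  intro h
  apply hcns
  refine ⟨(b - c - 1) / 2, ?_⟩
  field_simp
  linear_combination -h

lemma root_sq (b x : F) (hQ : Qd c b x = 0) :
    (2 * b * x + (b + c - 1)) ^ 2 = Dd c b := by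
  linear_combination 4 * b * hQ

lemma quad_card_s5 (htwo : (2:F) ≠ 0) (b : F) (hb : b ≠ 0) :
    (univ.filter fun x : F => Qd c b x = 0).card
      = (univ.filter fun y : F => y ^ 2 = Dd c b).card := by
  have h2b : (2 * b : F) ≠ 0 := mul_ne_zero htwo hb
  apply Finset.card_bij' (fun x _ => 2 * b * x + (b + c - 1))
    (fun y _ => (y - (b + c - 1)) * (2 * b)⁻¹)
  · intro x hx
    simp only [mem_filter, mem_univ, true_and] at hx ⊢
    exact root_sq c b x hx
  · intro y hy
    simp only [mem_filter, mem_univ, true_and] at hy ⊢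
    set x := (y - (b + c - 1)) * (2 * b)⁻¹ with hxdef
    have hxy : 2 * b * x + (b + c - 1) = y := by rw [hxdef]; field_simp; ring
    have key : Qd c b x * (4 * b) = (2 * b * x + (b + c - 1)) ^ 2 - Dd c b := by ring
    rw [hxy, hy, sub_self] at key
    have h4b : (4 * b : F) ≠ 0 := by
      have h4 : (4:F) ≠ 0 := by
        have h44 : (4:F) = 2 * 2 := by norm_num
        rw [h44]; exact mul_ne_zero htwo htwo
      exact mul_ne_zero h4 hb
    rcases mul_eq_zero.1 key with h | h
    · exact h
    · exact absurd h h4b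
  · intro x hx; field_simp; ring
  · intro y hy; field_simp; ring

lemma delta_zero (hc0 : c ≠ 0) (hc1 : c ≠ 1) :
    (univ.filter fun x : F => (x + 1)⁻¹ - c * x⁻¹ = 0).card = 1 := by
  have h1c : (1 - c : F) ≠ 0 := fun h => hc1 (by linear_combination -h)
  have hset : (univ.filter fun x : F => (x + 1)⁻¹ - c * x⁻¹ = 0) = {c / (1 - c)} := by
    ext x
    simp only [mem_filter, mem_univ, true_and, mem_singleton]
    constructor
    · intro h
      rcases eq_or_ne x 0 with rfl | hx
      · simp at h
      · rcases eq_or_ne x (-1) with rfl | hx1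
        · have : ((-1:F) + 1)⁻¹ - c * (-1:F)⁻¹ = c := by norm_num
          rw [this] at h
          exact absurd h hc0
        · have hx1' : x + 1 ≠ 0 := fun h' => hx1 (by linear_combination h')
          field_simp at h
          rw [eq_div_iff h1c]
          linear_combination h
    · rintro rfl
      have hx0 : c / (1 - c) ≠ 0 := div_ne_zero hc0 h1c
      have hx1' : c / (1 - c) + 1 ≠ 0 := by
        rw [div_add' _ _ _ h1c]
        apply div_ne_zero _ h1c
        intro h
        exact (one_ne_zero : (1:F) ≠ 0) (by linear_combination h)
      field_simp
      ring
  rw [hset, card_singleton]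

lemma delta_one (hc0 : c ≠ 0) (hc1 : c ≠ 1) (h1ns : ¬ IsSquare (c ^ 2 - 4 * c)) :
    (univ.filter fun x : F => (x + 1)⁻¹ - c * x⁻¹ = 1).card = 1 := by
  have hset : (univ.filter fun x : F => (x + 1)⁻¹ - c * x⁻¹ = 1) = {0} := by
    ext x
    simp only [mem_filter, mem_univ, true_and, mem_singleton]
    rw [fiber_iff c hc0 1 x one_ne_zero]
    constructor
    · rintro (⟨rfl, -⟩ | ⟨-, h⟩ | hq)
      · rfl
      · exact absurd h.symm hc1
      · exfalso
        have hr := root_sq c 1 x hq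
        exact h1ns ⟨2 * 1 * x + (1 + c - 1), by linear_combination -hr⟩
    · rintro rfl
      exact Or.inl ⟨rfl, rfl⟩
  rw [hset, card_singleton]

lemma delta_c (hc0 : c ≠ 0) (hc1 : c ≠ 1) (h2ns : ¬ IsSquare (1 - 4 * c)) :
    (univ.filter fun x : F => (x + 1)⁻¹ - c * x⁻¹ = c).card = 1 := by
  have hset : (univ.filter fun x : F => (x + 1)⁻¹ - c * x⁻¹ = c) = {-1} := by
    ext x
    simp only [mem_filter, mem_univ, true_and, mem_singleton]
    rw [fiber_iff c hc0 c x hc0]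
    constructor
    · rintro (⟨-, h⟩ | ⟨rfl, -⟩ | hq)
      · exact absurd h hc1
      · rfl
      · exfalso
        have hr := root_sq c c x hq
        exact h2ns ⟨2 * c * x + (c + c - 1), by linear_combination -hr⟩
    · rintro rfl
      exact Or.inr (Or.inl ⟨rfl, rfl⟩)
  rw [hset, card_singleton]

lemma delta_gen (htwo : (2:F) ≠ 0) (hc0 : c ≠ 0) (hcns : ¬ IsSquare c)
    (b : F) (hb0 : b ≠ 0) (hb1 : b ≠ 1) (hbc : b ≠ c) :
    (univ.filter fun x : F => (x + 1)⁻¹ - c * x⁻¹ = b).card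
      = if IsSquare (Dd c b) then 2 else 0 := by
  have hset : (univ.filter fun x : F => (x + 1)⁻¹ - c * x⁻¹ = b)
      = (univ.filter fun x : F => Qd c b x = 0) := by
    ext x
    simp only [mem_filter, mem_univ, true_and]
    rw [fiber_iff c hc0 b x hb0]
    constructor
    · rintro (⟨-, h⟩ | ⟨-, h⟩ | hq)
      · exact absurd h hb1
      · exact absurd h hbc
      · exact hq
    · intro hq
      exact Or.inr (Or.inr hq)
  rw [hset, quad_card_s5 c htwo b hb0, card_sq_eq' htwo _ (Dd_ne_zero c htwo hcns b)]

end Main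

theorem stmt_5 (p n : ℕ) (hp : p.Prime) (hpodd : Odd p) (hn : 1 ≤ n)
    (F : Type*) [Field F] [Fintype F] (hF : Fintype.card F = p ^ n)
    (c : F) (hc0 : c ≠ 0) (hc1 : c ≠ 1) (hc4 : c ≠ 4) (hc4i : c ≠ (4 : F)⁻¹)
    (h1 : chi F (c ^ 2 - 4 * c) = -1) (h2 : chi F (1 - 4 * c) = -1) (h3 : chi F c = -1) :
    comega F (p ^ n - 2) c 0 = (p ^ n - 3) / 2 ∧
    comega F (p ^ n - 2) c 1 = 3 ∧
    comega F (p ^ n - 2) c 2 = (p ^ n - 3) / 2 ∧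
    ∀ i, 3 ≤ i → comega F (p ^ n - 2) c i = 0 := by
  classical
  -- basic numeric facts
  have hp2 : p ≠ 2 := by rintro rfl; simp [Nat.odd_iff] at hpodd
  have hp3 : 3 ≤ p := by have := hp.two_le; omega
  have hq3 : 3 ≤ Fintype.card F := by
    rw [hF]
    calc 3 ≤ p := hp3
    _ ≤ p ^ n := Nat.le_self_pow (by omega) p
  have hoddq : Fintype.card F % 2 = 1 := by
    rw [hF]; exact Nat.odd_iff.mp (hpodd.pow)
  have hchar2 : ringChar F ≠ 2 := by
    intro h
    have := FiniteField.even_card_iff_char_two.mp h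
    omega
  have htwo : (2:F) ≠ 0 := Ring.two_ne_zero hchar2
  -- unpack the quadratic character hypotheses
  have hcns : ¬ IsSquare c := by
    unfold chi at h3; split_ifs at h3 <;> simp_all
  have h1ns : ¬ IsSquare (c ^ 2 - 4 * c) := by
    unfold chi at h1; split_ifs at h1 <;> simp_all
  have h2ns : ¬ IsSquare (1 - 4 * c) := by
    unfold chi at h2; split_ifs at h2 <;> simp_all
  -- the inverse function
  have hpow : ∀ x : F, x ^ (p ^ n - 2) = x⁻¹ := by
    intro x; rw [← hF]; exact pow_card_sub_two' hq3 x
  set dl : F → ℕ := fun b => (univ.filter fun x : F => (x + 1)⁻¹ - c * x⁻¹ = b).card with hdl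
  have hcd : ∀ b : F, cdelta F (p ^ n - 2) c b = dl b := by
    intro b
    rw [cdelta, Nat.card_eq_fintype_card, Fintype.card_subtype, hdl]
    congr 1
    apply filter_congr
    intro x _
    rw [hpow, hpow]
  have hco : ∀ i : ℕ, comega F (p ^ n - 2) c i = (univ.filter fun b : F => dl b = i).card := by
    intro i
    rw [comega, Nat.card_eq_fintype_card, Fintype.card_subtype]
    congr 1
    apply filter_congr
    intro b _
    rw [hcd]
  have d0 : dl 0 = 1 := delta_zero c hc0 hc1
  have d1 : dl 1 = 1 := delta_one c hc0 hc1 h1ns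
  have dc : dl c = 1 := delta_c c hc0 hc1 h2ns
  have dgen : ∀ b : F, b ≠ 0 → b ≠ 1 → b ≠ c →
      dl b = if IsSquare (Dd c b) then 2 else 0 := fun b hb0 hb1 hbc =>
    delta_gen c htwo hc0 hcns b hb0 hb1 hbc
  have dle : ∀ b : F, dl b ≤ 2 := by
    intro b
    rcases eq_or_ne b 0 with rfl | hb0
    · omega
    rcases eq_or_ne b 1 with rfl | hb1
    · omega
    rcases eq_or_ne b c with rfl | hbc
    · omega
    rw [dgen b hb0 hb1 hbc]; split_ifs <;> omega
  have hone : ∀ b : F, dl b = 1 ↔ b = 0 ∨ b = 1 ∨ b = c := by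
    intro b
    constructor
    · intro h
      by_contra hcon
      push_neg at hcon
      obtain ⟨hb0, hb1, hbc⟩ := hcon
      rw [dgen b hb0 hb1 hbc] at h
      split_ifs at h <;> omega
    · rintro (rfl | rfl | rfl) <;> assumption
  -- ω₁ = 3
  have hw1 : (univ.filter fun b : F => dl b = 1).card = 3 := by
    have hset : (univ.filter fun b : F => dl b = 1) = {0, 1, c} := by
      ext b
      simp only [mem_filter, mem_univ, true_and, mem_insert, mem_singleton]
      exact hone b
    rw [hset]
    rw [card_insert_of_notMem, card_insert_of_notMem, card_singleton]
    · simp only [mem_singleton]; exact fun h => hc1 h.symm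
    · simp only [mem_insert, mem_singleton]
      push_neg
      exact ⟨zero_ne_one, fun h => hc0 h.symm⟩
  -- sum of the δ's is q
  have hsum : Fintype.card F = ∑ b : F, dl b := by
    rw [← card_univ]
    exact Finset.card_eq_sum_card_fiberwise (fun x _ => mem_univ _)
  have hpoint : ∀ b : F, dl b = (if dl b = 1 then 1 else 0) + 2 * (if dl b = 2 then 1 else 0) := by
    intro b; have := dle b; split_ifs <;> omega
  have hsum2 : Fintype.card F
      = (univ.filter fun b : F => dl b = 1).card + 2 * (univ.filter fun b : F => dl b = 2).card := by
    rw [hsum, Finset.sum_congr rfl (fun b _ => hpoint b), Finset.sum_add_distrib,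
      ← Finset.mul_sum, ← Finset.card_filter, ← Finset.card_filter]
  have hpoint2 : ∀ b : F, (1:ℕ) = (if dl b = 0 then 1 else 0) + (if dl b = 1 then 1 else 0)
      + (if dl b = 2 then 1 else 0) := by
    intro b; have := dle b; split_ifs <;> omega
  have hsum3 : Fintype.card F
      = (univ.filter fun b : F => dl b = 0).card + (univ.filter fun b : F => dl b = 1).card
        + (univ.filter fun b : F => dl b = 2).card := by
    rw [← card_univ, card_eq_sum_ones, Finset.sum_congr rfl (fun b _ => hpoint2 b),
      Finset.sum_add_distrib, Finset.sum_add_distrib,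
      ← Finset.card_filter, ← Finset.card_filter, ← Finset.card_filter]
  have hge3 : ∀ i, 3 ≤ i → (univ.filter fun b : F => dl b = i).card = 0 := by
    intro i hi
    rw [card_eq_zero, filter_eq_empty_iff]
    intro b _
    have := dle b
    omega
  rw [hF] at hsum2 hsum3 hoddq hq3
  refine ⟨?_, ?_, ?_, ?_⟩
  · rw [hco 0]; omega
  · rw [hco 1]; exact hw1
  · rw [hco 2]; omega
  · intro i hi; rw [hco i]; exact hge3 i hi
end

section
/- Let p be an odd prime, n ≥ 1, q = p^n, and let F(x) = x^{q − 2} be the inverse power function over GF(q). Let c ∈ GF(q) with c ∉ {0, 1, 4, 4^{-1}}. If χ(c² − 4c)·χ(1 − 4c) = −1 and χ(c) = −1, then the c-differential spectrum of F is given by ω_0 = (q − 1)/2, ω_1 = 2, ω_2 = (q − 5)/2, ω_3 = 1, and ω_i = 0 for i ≥ 4. -/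
open Finset

section Aux

open scoped Classical

variable {F : Type*} [Field F] [Fintype F] {c : F}

lemma aux_two_ne (h : Odd (Fintype.card F)) : (2:F) ≠ 0 := by
  intro h2
  have h1 : ringChar F ∣ 2 := (ringChar.spec F 2).mp h2
  have h3 : ringChar F ≠ 1 := CharP.ringChar_ne_one
  rcases (Nat.dvd_prime Nat.prime_two).mp h1 with h4 | h4
  · exact h3 h4
  · have := FiniteField.even_card_iff_char_two.mp h4
    have := Nat.odd_iff.mp h
    omega

lemma aux_pow_inv (h : 3 ≤ Fintype.card F) (x : F) :
    x ^ (Fintype.card F - 2) = x⁻¹ := by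
  rcases eq_or_ne x 0 with rfl | hx
  · rw [zero_pow (by omega), inv_zero]
  · have h1 : x ^ (Fintype.card F - 1) = 1 := FiniteField.pow_card_sub_one_eq_one x hx
    have h2 : Fintype.card F - 1 = (Fintype.card F - 2) + 1 := by omega
    rw [h2, pow_succ] at h1
    exact eq_inv_of_mul_eq_one_left h1

lemma aux_mem_sol_iff (h3 : 3 ≤ Fintype.card F)
    (hodd : Odd (Fintype.card F)) (c b x : F) :
    ((x + 1) ^ (Fintype.card F - 2) - c * x ^ (Fintype.card F - 2) = b) ↔
      ((x = 0 ∧ b = 1) ∨ (x = -1 ∧ b = c) ∨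
        (x ≠ 0 ∧ x + 1 ≠ 0 ∧ b * (x * x) + (b + c - 1) * x + c = 0)) := by
  have hd : Odd (Fintype.card F - 2) := by
    obtain ⟨k, hk⟩ := hodd; exact ⟨k - 1, by omega⟩
  rcases eq_or_ne x 0 with rfl | hx
  · rw [zero_add, one_pow, zero_pow (by omega : Fintype.card F - 2 ≠ 0), mul_zero, sub_zero]
    constructor
    · intro h; exact Or.inl ⟨rfl, h.symm⟩
    · rintro (⟨-, h⟩ | ⟨h, -⟩ | ⟨h, -⟩)
      · exact h.symm
      · have : (1 : F) = 0 := by linear_combination h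
        exact absurd this one_ne_zero
      · exact absurd rfl h
  · rcases eq_or_ne x (-1) with rfl | hx1
    · rw [neg_add_cancel, zero_pow (by omega : Fintype.card F - 2 ≠ 0), hd.neg_one_pow]
      constructor
      · intro h; exact Or.inr (Or.inl ⟨rfl, by linear_combination -h⟩)
      · rintro (⟨h, -⟩ | ⟨-, h⟩ | ⟨-, h, -⟩)
        · have : (1 : F) = 0 := by linear_combination -h
          exact absurd this one_ne_zero
        · rw [h]; ring
        · exact absurd rfl h
    · have hx1' : x + 1 ≠ 0 := fun h => hx1 (eq_neg_of_add_eq_zero_left h)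
      rw [aux_pow_inv h3, aux_pow_inv h3]
      constructor
      · intro h
        refine Or.inr (Or.inr ⟨hx, hx1', ?_⟩)
        field_simp at h
        linear_combination -h
      · rintro (⟨h, -⟩ | ⟨h, -⟩ | ⟨-, -, h⟩)
        · exact absurd h hx
        · exact absurd h hx1
        · field_simp
          linear_combination -h

lemma aux_cdelta_eq_card (d : ℕ) (c b : F) :
    cdelta F d c b = (univ.filter fun x : F => (x + 1) ^ d - c * x ^ d = b).card := by
  rw [cdelta, Nat.card_eq_fintype_card, Fintype.card_subtype]

lemma aux_comega_eq_card (d : ℕ) (c : F) (i : ℕ) :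
    comega F d c i = (univ.filter fun b : F => cdelta F d c b = i).card := by
  rw [comega, Nat.card_eq_fintype_card, Fintype.card_subtype]

lemma aux_discrim_ne_zero (h2 : (2:F) ≠ 0) (hcsq : ¬ IsSquare c)
    (b : F) : discrim b (b + c - 1) c ≠ 0 := by
  rw [discrim]
  intro h
  refine hcsq ⟨(b - c - 1) / 2, ?_⟩
  field_simp
  linear_combination -h

lemma aux_roots_spec (h2 : (2:F) ≠ 0) {b s : F}
    (hc0 : c ≠ 0) (hb : b ≠ 0) (hs : discrim b (b + c - 1) c = s * s) (hsne : s ≠ 0) :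
    ∃ r₁ r₂ : F, r₁ ≠ r₂ ∧ r₁ ≠ 0 ∧ r₂ ≠ 0 ∧ r₁ + 1 ≠ 0 ∧ r₂ + 1 ≠ 0 ∧
      ∀ x : F, b * (x * x) + (b + c - 1) * x + c = 0 ↔ x = r₁ ∨ x = r₂ := by
  haveI : NeZero (2:F) := ⟨h2⟩
  have h2b : (2:F) * b ≠ 0 := mul_ne_zero h2 hb
  have hiff := fun x : F => quadratic_eq_zero_iff hb hs x
  have h0 : ¬((0:F) = (-(b + c - 1) + s) / (2 * b) ∨ (0:F) = (-(b + c - 1) - s) / (2 * b)) := by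
    rw [← hiff 0]
    intro h
    exact hc0 (by linear_combination h)
  have hm1 : ¬((-1:F) = (-(b + c - 1) + s) / (2 * b) ∨ (-1:F) = (-(b + c - 1) - s) / (2 * b)) := by
    rw [← hiff (-1)]
    intro h
    exact one_ne_zero (α := F) (by linear_combination h)
  push_neg at h0 hm1
  refine ⟨_, _, ?_, fun h => h0.1 h.symm, fun h => h0.2 h.symm, ?_, ?_, hiff⟩
  · intro heq
    rw [div_eq_div_iff h2b h2b] at heq
    exact hsne (by
      have hz : s * ((2:F) * b * 2) = 0 := by linear_combination heq
      rcases mul_eq_zero.mp hz with h | h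
      · exact h
      · exact absurd h (mul_ne_zero h2b h2))
  · intro h
    exact hm1.1 (by linear_combination -h)
  · intro h
    exact hm1.2 (by linear_combination -h)

lemma aux_delta_gen (h3 : 3 ≤ Fintype.card F) (hodd : Odd (Fintype.card F)) (h2 : (2:F) ≠ 0)
    (hcsq : ¬ IsSquare c) (hc0 : c ≠ 0) {b : F} (hb0 : b ≠ 0) (hb1 : b ≠ 1) (hbc : b ≠ c) :
    cdelta F (Fintype.card F - 2) c b
      = if IsSquare (discrim b (b + c - 1) c) then 2 else 0 := by
  rw [aux_cdelta_eq_card]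
  split_ifs with hD
  · obtain ⟨s, hs⟩ := hD
    have hsne : s ≠ 0 := by
      rintro rfl; exact aux_discrim_ne_zero h2 hcsq b (by rw [hs]; ring)
    obtain ⟨r₁, r₂, hrr, hr10, hr20, hr11, hr21, hiff⟩ := aux_roots_spec h2 hc0 hb0 hs hsne
    have heq : (univ.filter fun x : F =>
        (x + 1) ^ (Fintype.card F - 2) - c * x ^ (Fintype.card F - 2) = b) = {r₁, r₂} := by
      ext x
      simp only [mem_filter, mem_univ, true_and, mem_insert, mem_singleton]
      rw [aux_mem_sol_iff h3 hodd c b x]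
      constructor
      · rintro (⟨-, h⟩ | ⟨-, h⟩ | ⟨-, -, h⟩)
        · exact absurd h hb1
        · exact absurd h hbc
        · exact (hiff x).mp h
      · rintro (rfl | rfl)
        · exact Or.inr (Or.inr ⟨hr10, hr11, (hiff _).mpr (Or.inl rfl)⟩)
        · exact Or.inr (Or.inr ⟨hr20, hr21, (hiff _).mpr (Or.inr rfl)⟩)
    rw [heq, card_pair hrr]
  · have heq : (univ.filter fun x : F =>
        (x + 1) ^ (Fintype.card F - 2) - c * x ^ (Fintype.card F - 2) = b) = ∅ := by
      ext x
      simp only [mem_filter, mem_univ, true_and, notMem_empty, iff_false]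
      rw [aux_mem_sol_iff h3 hodd c b x]
      rintro (⟨-, h⟩ | ⟨-, h⟩ | ⟨-, -, h⟩)
      · exact hb1 h
      · exact hbc h
      · exact quadratic_ne_zero_of_discrim_ne_sq
          (fun s hss => hD ⟨s, hss.trans (sq s)⟩) x h
    rw [heq, card_empty]

lemma aux_delta_one (h3 : 3 ≤ Fintype.card F) (hodd : Odd (Fintype.card F)) (h2 : (2:F) ≠ 0)
    (hcsq : ¬ IsSquare c) (hc0 : c ≠ 0) (hc1 : c ≠ 1) :
    cdelta F (Fintype.card F - 2) c 1
      = if IsSquare (discrim 1 (1 + c - 1) c) then 3 else 1 := by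
  rw [aux_cdelta_eq_card]
  split_ifs with hD
  · obtain ⟨s, hs⟩ := hD
    have hsne : s ≠ 0 := by
      rintro rfl; exact aux_discrim_ne_zero h2 hcsq 1 (by rw [hs]; ring)
    obtain ⟨r₁, r₂, hrr, hr10, hr20, hr11, hr21, hiff⟩ :=
      aux_roots_spec h2 hc0 one_ne_zero hs hsne
    have heq : (univ.filter fun x : F =>
        (x + 1) ^ (Fintype.card F - 2) - c * x ^ (Fintype.card F - 2) = 1)
        = insert 0 {r₁, r₂} := by
      ext x
      simp only [mem_filter, mem_univ, true_and, mem_insert, mem_singleton]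
      rw [aux_mem_sol_iff h3 hodd c 1 x]
      constructor
      · rintro (⟨h, -⟩ | ⟨-, h⟩ | ⟨-, -, h⟩)
        · exact Or.inl h
        · exact absurd h.symm hc1
        · exact Or.inr ((hiff x).mp h)
      · rintro (rfl | rfl | rfl)
        · exact Or.inl ⟨rfl, rfl⟩
        · exact Or.inr (Or.inr ⟨hr10, hr11, (hiff _).mpr (Or.inl rfl)⟩)
        · exact Or.inr (Or.inr ⟨hr20, hr21, (hiff _).mpr (Or.inr rfl)⟩)
    rw [heq, card_insert_of_notMem (by simp [Ne.symm hr10, Ne.symm hr20]), card_pair hrr]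
  · have heq : (univ.filter fun x : F =>
        (x + 1) ^ (Fintype.card F - 2) - c * x ^ (Fintype.card F - 2) = 1) = {0} := by
      ext x
      simp only [mem_filter, mem_univ, true_and, mem_singleton]
      rw [aux_mem_sol_iff h3 hodd c 1 x]
      constructor
      · rintro (⟨h, -⟩ | ⟨-, h⟩ | ⟨-, -, h⟩)
        · exact h
        · exact absurd h.symm hc1
        · exact absurd h (quadratic_ne_zero_of_discrim_ne_sq
            (fun s hss => hD ⟨s, hss.trans (sq s)⟩) x)
      · rintro rfl
        exact Or.inl ⟨rfl, rfl⟩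
    rw [heq, card_singleton]

lemma aux_delta_c (h3 : 3 ≤ Fintype.card F) (hodd : Odd (Fintype.card F)) (h2 : (2:F) ≠ 0)
    (hcsq : ¬ IsSquare c) (hc0 : c ≠ 0) (hc1 : c ≠ 1) :
    cdelta F (Fintype.card F - 2) c c
      = if IsSquare (discrim c (c + c - 1) c) then 3 else 1 := by
  rw [aux_cdelta_eq_card]
  split_ifs with hD
  · obtain ⟨s, hs⟩ := hD
    have hsne : s ≠ 0 := by
      rintro rfl; exact aux_discrim_ne_zero h2 hcsq c (by rw [hs]; ring)
    obtain ⟨r₁, r₂, hrr, hr10, hr20, hr11, hr21, hiff⟩ :=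
      aux_roots_spec h2 hc0 hc0 hs hsne
    have heq : (univ.filter fun x : F =>
        (x + 1) ^ (Fintype.card F - 2) - c * x ^ (Fintype.card F - 2) = c)
        = insert (-1) {r₁, r₂} := by
      ext x
      simp only [mem_filter, mem_univ, true_and, mem_insert, mem_singleton]
      rw [aux_mem_sol_iff h3 hodd c c x]
      constructor
      · rintro (⟨-, h⟩ | ⟨h, -⟩ | ⟨-, -, h⟩)
        · exact absurd h hc1
        · exact Or.inl h
        · exact Or.inr ((hiff x).mp h)
      · rintro (rfl | rfl | rfl)
        · exact Or.inr (Or.inl ⟨rfl, rfl⟩)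
        · exact Or.inr (Or.inr ⟨hr10, hr11, (hiff _).mpr (Or.inl rfl)⟩)
        · exact Or.inr (Or.inr ⟨hr20, hr21, (hiff _).mpr (Or.inr rfl)⟩)
    have hm1 : (-1 : F) ∉ ({r₁, r₂} : Finset F) := by
      simp only [mem_insert, mem_singleton]
      rintro (rfl | rfl)
      · exact hr11 (by ring)
      · exact hr21 (by ring)
    rw [heq, card_insert_of_notMem hm1, card_pair hrr]
  · have heq : (univ.filter fun x : F =>
        (x + 1) ^ (Fintype.card F - 2) - c * x ^ (Fintype.card F - 2) = c) = {-1} := by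
      ext x
      simp only [mem_filter, mem_univ, true_and, mem_singleton]
      rw [aux_mem_sol_iff h3 hodd c c x]
      constructor
      · rintro (⟨-, h⟩ | ⟨h, -⟩ | ⟨-, -, h⟩)
        · exact absurd h hc1
        · exact h
        · exact absurd h (quadratic_ne_zero_of_discrim_ne_sq
            (fun s hss => hD ⟨s, hss.trans (sq s)⟩) x)
      · rintro rfl
        exact Or.inr (Or.inl ⟨rfl, rfl⟩)
    rw [heq, card_singleton]

lemma aux_delta_zero (h3 : 3 ≤ Fintype.card F) (hodd : Odd (Fintype.card F))
    (hc0 : c ≠ 0) (hc1 : c ≠ 1) :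
    cdelta F (Fintype.card F - 2) c 0 = 1 := by
  rw [aux_cdelta_eq_card]
  have h1c : (1:F) - c ≠ 0 := sub_ne_zero.mpr (Ne.symm hc1)
  have heq : (univ.filter fun x : F =>
      (x + 1) ^ (Fintype.card F - 2) - c * x ^ (Fintype.card F - 2) = 0)
      = {c / (1 - c)} := by
    ext x
    simp only [mem_filter, mem_univ, true_and, mem_singleton]
    rw [aux_mem_sol_iff h3 hodd c 0 x]
    constructor
    · rintro (⟨-, h⟩ | ⟨-, h⟩ | ⟨hx0, hx1, h⟩)
      · exact absurd h.symm one_ne_zero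
      · exact absurd h.symm hc0
      · field_simp
        linear_combination -h
    · rintro rfl
      refine Or.inr (Or.inr ⟨div_ne_zero hc0 h1c, ?_, ?_⟩)
      · intro h
        apply one_ne_zero (α := F)
        field_simp at h
        linear_combination h
      · field_simp
        ring
  rw [heq, card_singleton]

end Aux

open scoped Classical in
lemma aux_chi_mul {F : Type*} [Field F] (a b : F) (h : chi F a * chi F b = -1) :
    (IsSquare a ∧ ¬ IsSquare b) ∨ (¬ IsSquare a ∧ IsSquare b) := by
  unfold chi at h
  split_ifs at h <;> simp_all

theorem stmt_7 (p n : ℕ) (hp : p.Prime) (hpodd : Odd p) (hn : 1 ≤ n)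
    (F : Type*) [Field F] [Fintype F] (hF : Fintype.card F = p ^ n)
    (c : F) (hc0 : c ≠ 0) (hc1 : c ≠ 1) (hc4 : c ≠ 4) (hc4i : c ≠ (4 : F)⁻¹)
    (h1 : chi F (c ^ 2 - 4 * c) * chi F (1 - 4 * c) = -1) (h3 : chi F c = -1) :
    comega F (p ^ n - 2) c 0 = (p ^ n - 1) / 2 ∧
    comega F (p ^ n - 2) c 1 = 2 ∧
    comega F (p ^ n - 2) c 2 = (p ^ n - 5) / 2 ∧
    comega F (p ^ n - 2) c 3 = 1 ∧
    ∀ i, 4 ≤ i → comega F (p ^ n - 2) c i = 0 := by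
  classical
  rw [← hF]
  have hp2 : p ≠ 2 := by rintro rfl; exact (by norm_num : ¬ Odd 2) hpodd
  have hp3 : 3 ≤ p := by have := hp.two_le; omega
  have hq3 : 3 ≤ Fintype.card F := by
    rw [hF]
    calc 3 ≤ p := hp3
    _ = p ^ 1 := (pow_one p).symm
    _ ≤ p ^ n := Nat.pow_le_pow_right (by omega) hn
  have hqodd : Odd (Fintype.card F) := by rw [hF]; exact hpodd.pow
  have h2 : (2:F) ≠ 0 := aux_two_ne hqodd
  have hcsq : ¬ IsSquare c := by
    intro hsq
    unfold chi at h3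
    rw [if_neg hc0, if_pos hsq] at h3
    norm_num at h3
  have hcm1 : c ≠ -1 := by
    rintro rfl
    rw [show ((-1:F)^2 - 4*(-1) : F) = 5 by norm_num,
      show ((1:F) - 4*(-1) : F) = 5 by norm_num] at h1
    linarith [mul_self_nonneg (chi F (5:F))]
  have hqne3 : Fintype.card F ≠ 3 := by
    intro h
    have hcp : c ^ (Fintype.card F - 1) = 1 := FiniteField.pow_card_sub_one_eq_one c hc0
    rw [h] at hcp
    norm_num at hcp
    rcases hcp with h' | h'
    · exact hc1 h'
    · exact hcm1 h'
  have hq5 : 5 ≤ Fintype.card F := by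
    obtain ⟨k, hk⟩ := hqodd; omega
  have hxor := aux_chi_mul _ _ h1
  have hd1 : discrim 1 (1 + c - 1) c = c^2 - 4*c := by rw [discrim]; ring
  have hdc : discrim c (c + c - 1) c = 1 - 4*c := by rw [discrim]; ring
  have δ1 := aux_delta_one hq3 hqodd h2 hcsq hc0 hc1
  have δc := aux_delta_c hq3 hqodd h2 hcsq hc0 hc1
  rw [hd1] at δ1
  rw [hdc] at δc
  obtain ⟨u, v, hmem, hdu, hdv⟩ :
      ∃ u v : F, (∀ b : F, (b = 1 ∨ b = c) ↔ (b = u ∨ b = v)) ∧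
        cdelta F (Fintype.card F - 2) c u = 3 ∧ cdelta F (Fintype.card F - 2) c v = 1 := by
    rcases hxor with ⟨hA, hB⟩ | ⟨hA, hB⟩
    · exact ⟨1, c, fun b => Iff.rfl, by rwa [if_pos hA] at δ1, by rwa [if_neg hB] at δc⟩
    · exact ⟨c, 1, fun b => or_comm, by rwa [if_pos hB] at δc, by rwa [if_neg hA] at δ1⟩
  have hu0 : u ≠ 0 := by
    rcases (hmem u).mpr (Or.inl rfl) with h' | h'
    · rw [h']; exact one_ne_zero
    · rw [h']; exact hc0
  have hv0 : v ≠ 0 := by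
    rcases (hmem v).mpr (Or.inr rfl) with h' | h'
    · rw [h']; exact one_ne_zero
    · rw [h']; exact hc0
  have huv : u ≠ v := by
    intro h
    rw [h, hdv] at hdu
    norm_num at hdu
  have δ0 := aux_delta_zero hq3 hqodd hc0 hc1
  have hgen : ∀ b : F, b ≠ 0 → b ≠ u → b ≠ v →
      cdelta F (Fintype.card F - 2) c b
        = if IsSquare (discrim b (b + c - 1) c) then 2 else 0 := by
    intro b hb0 hbu hbv
    refine aux_delta_gen hq3 hqodd h2 hcsq hc0 hb0 ?_ ?_
    · intro h
      rcases (hmem b).mp (Or.inl h) with h' | h'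
      · exact hbu h'
      · exact hbv h'
    · intro h
      rcases (hmem b).mp (Or.inr h) with h' | h'
      · exact hbu h'
      · exact hbv h'
  have hval : ∀ b : F, cdelta F (Fintype.card F - 2) c b = 3 ↔ b = u := by
    intro b
    constructor
    · intro h
      by_contra hbu
      by_cases hb0 : b = 0
      · rw [hb0, δ0] at h; norm_num at h
      by_cases hbv : b = v
      · rw [hbv, hdv] at h; norm_num at h
      · rw [hgen b hb0 hbu hbv] at h
        split_ifs at h <;> omega
    · rintro rfl; exact hdu
  have hval1 : ∀ b : F, cdelta F (Fintype.card F - 2) c b = 1 ↔ (b = 0 ∨ b = v) := by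
    intro b
    constructor
    · intro h
      by_cases hb0 : b = 0
      · exact Or.inl hb0
      by_cases hbv : b = v
      · exact Or.inr hbv
      by_cases hbu : b = u
      · rw [hbu, hdu] at h; norm_num at h
      · rw [hgen b hb0 hbu hbv] at h
        split_ifs at h <;> omega
    · rintro (rfl | rfl)
      · exact δ0
      · exact hdv
  have hle : ∀ b : F, cdelta F (Fintype.card F - 2) c b < 4 := by
    intro b
    by_cases hb0 : b = 0
    · rw [hb0, δ0]; omega
    by_cases hbu : b = u
    · rw [hbu, hdu]; omega
    by_cases hbv : b = v
    · rw [hbv, hdv]; omega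
    · rw [hgen b hb0 hbu hbv]
      split_ifs <;> omega
  have hω3 : comega F (Fintype.card F - 2) c 3 = 1 := by
    rw [aux_comega_eq_card]
    have heq : (univ.filter fun b : F => cdelta F (Fintype.card F - 2) c b = 3) = {u} := by
      ext b
      simp only [mem_filter, mem_univ, true_and, mem_singleton]
      exact hval b
    rw [heq, card_singleton]
  have hω1 : comega F (Fintype.card F - 2) c 1 = 2 := by
    rw [aux_comega_eq_card]
    have heq : (univ.filter fun b : F => cdelta F (Fintype.card F - 2) c b = 1)
        = {0, v} := by
      ext b
      simp only [mem_filter, mem_univ, true_and, mem_insert, mem_singleton]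
      exact hval1 b
    rw [heq, card_pair (Ne.symm hv0)]
  have hω4 : ∀ i, 4 ≤ i → comega F (Fintype.card F - 2) c i = 0 := by
    intro i hi
    rw [aux_comega_eq_card]
    rw [Finset.filter_eq_empty_iff.mpr (fun b _ => by have := hle b; omega), card_empty]
  have hsum1 : ∑ b : F, cdelta F (Fintype.card F - 2) c b = Fintype.card F := by
    rw [Finset.sum_congr rfl (fun b _ => aux_cdelta_eq_card (Fintype.card F - 2) c b)]
    rw [← Finset.card_univ]
    exact (Finset.card_eq_sum_card_fiberwise
      (f := fun x : F => (x + 1) ^ (Fintype.card F - 2) - c * x ^ (Fintype.card F - 2))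
      (fun x _ => mem_univ _)).symm
  have hsum2 : ∑ b : F, cdelta F (Fintype.card F - 2) c b
      = ∑ i ∈ Finset.range 4, (comega F (Fintype.card F - 2) c i) * i := by
    rw [← Finset.sum_fiberwise_of_maps_to
      (g := fun b : F => cdelta F (Fintype.card F - 2) c b)
      (fun b _ => Finset.mem_range.mpr (hle b))]
    refine Finset.sum_congr rfl (fun i _ => ?_)
    rw [aux_comega_eq_card]
    rw [Finset.sum_congr rfl (fun b hb => (Finset.mem_filter.mp hb).2),
      Finset.sum_const, smul_eq_mul]
  have hsum3 : Fintype.card F = ∑ i ∈ Finset.range 4, comega F (Fintype.card F - 2) c i := by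
    rw [Finset.sum_congr rfl (fun i _ => aux_comega_eq_card (Fintype.card F - 2) c i)]
    rw [← Finset.card_univ]
    exact Finset.card_eq_sum_card_fiberwise (fun b _ => Finset.mem_range.mpr (hle b))
  rw [hsum2] at hsum1
  simp only [Finset.sum_range_succ, Finset.sum_range_zero, zero_add] at hsum1 hsum3
  rw [hω1, hω3] at hsum1 hsum3
  have hodd' : Fintype.card F % 2 = 1 := Nat.odd_iff.mp hqodd
  refine ⟨by omega, hω1, by omega, hω3, hω4⟩
end

section
/- Let p be an odd prime, n ≥ 1, q = p^n, and let F(x) = x^{q − 2} be the inverse power function over GF(q). Let c ∈ GF(q) with c ∉ {0, 1, 4, 4^{-1}}. If χ(c² − 4c)·χ(1 − 4c) = −1 and χ(c) = 1, then the c-differential spectrum of F is given by ω_0 = (q − 3)/2, ω_1 = 4, ω_2 = (q − 7)/2, ω_3 = 1, and ω_i = 0 for i ≥ 4. -/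
open Finset

set_option linter.unusedSectionVars false
set_option linter.unusedVariables false
set_option maxHeartbeats 1000000

section AuxAll
variable {F : Type*} [Field F] [Fintype F] [DecidableEq F]

/-- number of square roots -/
noncomputable def sqc (a : F) : ℕ := #(univ.filter fun y : F => y ^ 2 = a)

/-- discriminant -/
def DDq (c b : F) : F := (b + c - 1) ^ 2 - 4 * b * c

lemma sqc_zero : sqc (0 : F) = 1 := by
  classical
  rw [sqc]
  rw [show (univ.filter fun y : F => y ^ 2 = 0) = {0} by
    ext y; simp [pow_eq_zero_iff]]
  simp

lemma sqc_sq (h2 : (2 : F) ≠ 0) {a : F} (ha : a ≠ 0) (h : IsSquare a) : sqc a = 2 := by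
  classical
  obtain ⟨r, hr⟩ := h
  have hr2 : a = r ^ 2 := by rw [hr]; ring
  have hr0 : r ≠ 0 := by rintro rfl; simp at hr2; exact ha hr2
  rw [sqc]
  rw [show (univ.filter fun y : F => y ^ 2 = a) = {r, -r} by
    ext y
    simp only [mem_filter, mem_univ, true_and, mem_insert, mem_singleton]
    constructor
    · intro h
      have : (y - r) * (y + r) = 0 := by linear_combination h + hr2
      rcases mul_eq_zero.1 this with h | h
      · left; linear_combination h
      · right; linear_combination h
    · rintro (rfl | rfl)
      · exact hr2.symm
      · rw [hr2]; ring]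
  rw [card_insert_of_notMem, card_singleton]
  simp only [mem_singleton]
  intro h
  apply hr0
  have : (2 : F) * r = 0 := by linear_combination h
  rcases mul_eq_zero.1 this with h | h
  · exact absurd h h2
  · exact h

lemma sqc_ns {a : F} (h : ¬ IsSquare a) : sqc a = 0 := by
  classical
  rw [sqc, card_eq_zero]
  ext y
  simp only [mem_filter, mem_univ, true_and, notMem_empty, iff_false]
  intro hy
  exact h ⟨y, by rw [← hy]; ring⟩

lemma sqc_le_two (h2 : (2 : F) ≠ 0) (a : F) : sqc a ≤ 2 := by
  by_cases h0 : a = 0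
  · subst h0; rw [sqc_zero]; omega
  by_cases hs : IsSquare a
  · rw [sqc_sq h2 h0 hs]
  · rw [sqc_ns hs]; omega

lemma sqc_eq_one_iff (h2 : (2 : F) ≠ 0) {a : F} : sqc a = 1 ↔ a = 0 := by
  constructor
  · intro h
    by_contra h0
    by_cases hs : IsSquare a
    · rw [sqc_sq h2 h0 hs] at h; omega
    · rw [sqc_ns hs] at h; omega
  · rintro rfl; exact sqc_zero


lemma quad_iff {c b x : F} (hx0 : x ≠ 0) (hx1 : x + 1 ≠ 0) :
    (x + 1)⁻¹ - c * x⁻¹ = b ↔ b * x ^ 2 + (b + c - 1) * x + c = 0 := by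
  constructor
  · intro h
    have h' : (x + 1)⁻¹ * (x + 1) = 1 := inv_mul_cancel₀ hx1
    have h'' : x⁻¹ * x = 1 := inv_mul_cancel₀ hx0
    have key : ((x + 1)⁻¹ - c * x⁻¹) * ((x + 1) * x) = b * ((x + 1) * x) := by rw [h]
    calc b * x ^ 2 + (b + c - 1) * x + c
        = b * ((x+1)*x) - ((x + 1)⁻¹ - c * x⁻¹) * ((x+1)*x)
          + (x * ((x+1)⁻¹ * (x+1)) - (c*(x+1)) * (x⁻¹ * x)) - x + c * (x+1) := by ring
      _ = 0 := by rw [key, h', h'']; ring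
  · intro h
    have key : ((x + 1)⁻¹ - c * x⁻¹ - b) * ((x + 1) * x) = 0 := by
      have h' : (x + 1)⁻¹ * (x + 1) = 1 := inv_mul_cancel₀ hx1
      have h'' : x⁻¹ * x = 1 := inv_mul_cancel₀ hx0
      calc ((x + 1)⁻¹ - c * x⁻¹ - b) * ((x + 1) * x)
          = x * ((x+1)⁻¹ * (x+1)) - (c * (x+1)) * (x⁻¹ * x)
            - (b * x ^ 2 + (b + c - 1) * x + c) + c * x + c - x := by ring
        _ = 0 := by rw [h', h'', h]; ring
    rcases mul_eq_zero.1 key with h | h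
    · linear_combination h
    · exact absurd h (by simp [hx0, hx1])

lemma gg_zero (c : F) : ((0:F) + 1)⁻¹ - c * (0:F)⁻¹ = 1 := by simp

lemma gg_neg_one (c : F) : ((-1:F) + 1)⁻¹ - c * (-1:F)⁻¹ = c := by
  norm_num

lemma delta_formula (h2 : (2:F) ≠ 0) {c : F} (hc0 : c ≠ 0) (hc1 : c ≠ 1) (b : F) :
    #(univ.filter fun x : F => (x + 1)⁻¹ - c * x⁻¹ = b)
      = if b = 0 then 1
        else sqc (DDq c b) + (if b = 1 then 1 else 0) + (if b = c then 1 else 0) := by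
  by_cases hb0 : b = 0
  · subst hb0
    rw [if_pos rfl]
    rw [show (univ.filter fun x : F => (x + 1)⁻¹ - c * x⁻¹ = 0) = {c * (1 - c)⁻¹} from ?_, card_singleton]
    have h1c : (1 : F) - c ≠ 0 := fun h => hc1 (by linear_combination -h)
    have hx0 : c * (1-c)⁻¹ ≠ 0 := by
      simp [hc0, h1c]
    have hx1 : c * (1-c)⁻¹ + 1 ≠ 0 := by
      intro h
      have h' : (c * (1-c)⁻¹ + 1) * (1 - c) = 0 := by rw [h, zero_mul]
      have h'' : c * ((1-c)⁻¹ * (1-c)) + (1 - c) = 0 := by linear_combination h'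
      rw [inv_mul_cancel₀ h1c] at h''
      exact (one_ne_zero : (1:F) ≠ 0) (by linear_combination h'')
    ext x
    simp only [mem_filter, mem_univ, true_and, mem_singleton]
    constructor
    · intro h
      rcases eq_or_ne x 0 with rfl | hx0'
      · rw [gg_zero] at h; exact absurd h one_ne_zero
      rcases eq_or_ne (x+1) 0 with hx1' | hx1'
      · have : x = -1 := by linear_combination hx1'
        subst this
        rw [gg_neg_one] at h; exact absurd h hc0
      rw [quad_iff hx0' hx1'] at h
      have hthis : (1 - c) * x = c := by linear_combination -h
      calc x = x * ((1-c) * (1-c)⁻¹) := by rw [mul_inv_cancel₀ h1c, mul_one]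
        _ = ((1-c) * x) * (1-c)⁻¹ := by ring
        _ = c * (1-c)⁻¹ := by rw [hthis]
    · rintro rfl
      rw [quad_iff hx0 hx1]
      have hkey : (0:F) * (c*(1-c)⁻¹)^2 + (0 + c - 1) * (c * (1-c)⁻¹) + c
          = c * (1 - (1-c) * (1-c)⁻¹) := by ring
      rw [hkey, mul_inv_cancel₀ h1c]
      ring
  · rw [if_neg hb0]
    rw [← Finset.card_filter_add_card_filter_not (s := univ.filter fun x : F => (x + 1)⁻¹ - c * x⁻¹ = b) (p := fun x => x = 0 ∨ x = -1)]
    have e1 : #((univ.filter fun x : F => (x + 1)⁻¹ - c * x⁻¹ = b).filter fun x => x = 0 ∨ x = -1)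
        = (if b = 1 then 1 else 0) + (if b = c then 1 else 0) := by
      rw [filter_filter]
      by_cases hb1 : b = 1
      · subst hb1
        rw [if_pos rfl, if_neg (Ne.symm hc1)]
        rw [show (univ.filter fun x : F => ((x + 1)⁻¹ - c * x⁻¹ = 1) ∧ (x = 0 ∨ x = -1)) = {0} from ?_]
        · simp
        ext x
        simp only [mem_filter, mem_univ, true_and, mem_singleton]
        constructor
        · rintro ⟨h, rfl | rfl⟩
          · rfl
          · rw [gg_neg_one] at h; exact absurd h hc1
        · rintro rfl; exact ⟨gg_zero c, Or.inl rfl⟩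
      · rw [if_neg hb1]
        by_cases hbc : b = c
        · rw [if_pos hbc]
          rw [show (univ.filter fun x : F => ((x + 1)⁻¹ - c * x⁻¹ = b) ∧ (x = 0 ∨ x = -1)) = {-1} from ?_]
          · simp
          ext x
          simp only [mem_filter, mem_univ, true_and, mem_singleton]
          constructor
          · rintro ⟨h, rfl | rfl⟩
            · rw [gg_zero] at h; exact absurd h.symm hb1
            · rfl
          · rintro rfl
            refine ⟨?_, Or.inr rfl⟩
            rw [gg_neg_one]; exact hbc.symm
        · rw [if_neg hbc]
          rw [card_eq_zero, eq_empty_iff_forall_notMem]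
          intro x hx
          simp only [mem_filter, mem_univ, true_and] at hx
          rcases hx with ⟨h, rfl | rfl⟩
          · rw [gg_zero] at h; exact hb1 h.symm
          · rw [gg_neg_one] at h; exact hbc h.symm
    have e2 : #((univ.filter fun x : F => (x + 1)⁻¹ - c * x⁻¹ = b).filter fun x => ¬(x = 0 ∨ x = -1))
        = sqc (DDq c b) := by
      rw [filter_filter, sqc]
      apply card_nbij' (i := fun x => 2 * b * x + (b + c - 1)) (j := fun y => (y - (b + c - 1)) * (2 * b)⁻¹)
      · intro x hx
        simp only [mem_coe, mem_filter, mem_univ, true_and] at hx ⊢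
        obtain ⟨hgx, hx'⟩ := hx
        push_neg at hx'
        obtain ⟨hx0, hxm1⟩ := hx'
        have hx1 : x + 1 ≠ 0 := fun h => hxm1 (by linear_combination h)
        rw [quad_iff hx0 hx1] at hgx
        rw [DDq]
        linear_combination 4 * b * hgx
      · intro y hy
        simp only [mem_coe, mem_filter, mem_univ, true_and] at hy ⊢
        have h2b : (2 : F) * b ≠ 0 := mul_ne_zero h2 hb0
        rw [DDq] at hy
        set x := (y - (b + c - 1)) * (2 * b)⁻¹ with hxdef
        have hxeq : 2 * b * x = y - (b + c - 1) := by
          rw [hxdef, mul_comm (2*b), mul_assoc, inv_mul_cancel₀ h2b, mul_one]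
        have hquad : b * x ^ 2 + (b + c - 1) * x + c = 0 := by
          have h4 : (4 : F) * b ≠ 0 := by
            intro h
            rcases mul_eq_zero.1 h with h | h
            · exact h2 (by
                have : (2:F) * 2 = 0 := by linear_combination h
                rcases mul_eq_zero.1 this with h | h <;> exact h)
            · exact hb0 h
          have expand : (4 * b) * (b * x ^ 2 + (b + c - 1) * x + c)
              = (2*b*x) * (2*b*x) + 2 * (b+c-1) * (2*b*x) + 4 * b * c := by ring
          rw [hxeq] at expand
          have : (4 * b) * (b * x ^ 2 + (b + c - 1) * x + c) = 0 := by
            rw [expand]; linear_combination hy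
          exact (mul_eq_zero.1 this).resolve_left h4
        have hx0 : x ≠ 0 := by
          intro hxe
          rw [hxe] at hquad
          rw [show b * (0:F) ^ 2 + (b + c - 1) * 0 + c = c by ring] at hquad
          exact hc0 hquad
        have hxm1 : x ≠ -1 := by
          intro hxe
          rw [hxe] at hquad
          rw [show b * (-1:F) ^ 2 + (b + c - 1) * (-1) + c = 1 by ring] at hquad
          exact one_ne_zero hquad
        have hx1 : x + 1 ≠ 0 := fun h => hxm1 (by linear_combination h)
        refine ⟨(quad_iff hx0 hx1).2 hquad, ?_⟩
        push_neg
        exact ⟨hx0, hxm1⟩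
      · intro x hx
        simp only [mem_coe, mem_filter, mem_univ, true_and] at hx
        have h2b : (2 : F) * b ≠ 0 := mul_ne_zero h2 hb0
        field_simp
        ring
      · intro y hy
        have h2b : (2 : F) * b ≠ 0 := mul_ne_zero h2 hb0
        field_simp
        ring
    rw [e1, e2]
    omega

lemma pair_count (h2 : (2:F) ≠ 0) {a : F} (ha : a ≠ 0) :
    #((univ : Finset (F × F)).filter fun z => z.1 ^ 2 - z.2 ^ 2 = a)
      = Fintype.card F - 1 := by
  have : (Fintype.card F - 1) = #(univ.filter fun t : F => t ≠ 0) := by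
    rw [filter_ne', card_erase_of_mem (mem_univ _), card_univ]
  rw [this]
  apply card_nbij' (i := fun z => z.1 + z.2)
    (j := fun t => ((t + a * t⁻¹) * 2⁻¹, (t - a * t⁻¹) * 2⁻¹))
  · intro z hz
    simp only [mem_coe, mem_filter, mem_univ, true_and] at hz ⊢
    intro h
    apply ha
    rw [← hz]
    have : z.2 = -z.1 := by linear_combination h
    rw [this]; ring
  · intro t ht
    simp only [mem_coe, mem_filter, mem_univ, true_and] at ht ⊢
    have hti : t * t⁻¹ = 1 := mul_inv_cancel₀ ht
    have h2i : (2:F) * 2⁻¹ = 1 := mul_inv_cancel₀ h2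
    calc ((t + a * t⁻¹) * 2⁻¹) ^ 2 - ((t - a * t⁻¹) * 2⁻¹) ^ 2
        = (t * t⁻¹) * a * (2 * 2⁻¹) * (2 * 2⁻¹) := by ring
      _ = a := by rw [hti, h2i]; ring
  · intro z hz
    simp only [mem_coe, mem_filter, mem_univ, true_and] at hz
    have hz1 : z.1 + z.2 ≠ 0 := by
      intro h
      apply ha
      rw [← hz]
      have : z.2 = -z.1 := by linear_combination h
      rw [this]; ring
    have key : a * (z.1 + z.2)⁻¹ = z.1 - z.2 := by
      rw [← hz]
      rw [show z.1 ^ 2 - z.2 ^ 2 = (z.1 - z.2) * (z.1 + z.2) by ring]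
      rw [mul_assoc, mul_inv_cancel₀ hz1, mul_one]
    have h2i : (2:F) * 2⁻¹ = 1 := mul_inv_cancel₀ h2
    ext
    · show (z.1 + z.2 + a * (z.1 + z.2)⁻¹) * 2⁻¹ = z.1
      rw [key]
      calc (z.1 + z.2 + (z.1 - z.2)) * 2⁻¹ = z.1 * (2 * 2⁻¹) := by ring
        _ = z.1 := by rw [h2i]; ring
    · show (z.1 + z.2 - a * (z.1 + z.2)⁻¹) * 2⁻¹ = z.2
      rw [key]
      calc (z.1 + z.2 - (z.1 - z.2)) * 2⁻¹ = z.2 * (2 * 2⁻¹) := by ring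
        _ = z.2 := by rw [h2i]; ring
  · intro t ht
    simp only [mem_coe, mem_filter, mem_univ, true_and] at ht
    show (t + a * t⁻¹) * 2⁻¹ + (t - a * t⁻¹) * 2⁻¹ = t
    have h2i : (2:F) * 2⁻¹ = 1 := mul_inv_cancel₀ h2
    calc (t + a * t⁻¹) * 2⁻¹ + (t - a * t⁻¹) * 2⁻¹ = t * (2 * 2⁻¹) := by ring
      _ = t := by rw [h2i]; ring

lemma fiber_sum (h2 : (2:F) ≠ 0) {a : F} (ha : a ≠ 0) :
    #((univ : Finset (F × F)).filter fun z => z.1 ^ 2 - z.2 ^ 2 = a)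
      = ∑ u : F, sqc (u ^ 2 - a) := by
  rw [card_eq_sum_card_fiberwise (f := fun z : F × F => z.1) (t := univ) (fun _ _ => mem_univ _)]
  apply sum_congr rfl
  intro u _
  rw [sqc]
  apply card_nbij' (i := fun z => z.2) (j := fun v => (u, v))
  · intro z hz
    simp only [mem_coe, mem_filter, mem_univ, true_and] at hz ⊢
    obtain ⟨h1, h2'⟩ := hz
    linear_combination -h1 + (z.1 + u) * h2'
  · intro v hv
    simp only [mem_coe, mem_filter, mem_univ, true_and] at hv ⊢
    exact ⟨by linear_combination -hv, by trivial⟩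
  · intro z hz
    simp only [mem_coe, mem_filter, mem_univ, true_and] at hz
    rw [← hz.2]
  · intro v _
    rfl

lemma count_squares (h2 : (2:F) ≠ 0) {a : F} (ha : a ≠ 0) (hasq : IsSquare a) :
    2 * #(univ.filter fun u : F => u ^ 2 - a ≠ 0 ∧ IsSquare (u ^ 2 - a)) + 3 = Fintype.card F ∧
    2 * #(univ.filter fun u : F => ¬ IsSquare (u ^ 2 - a)) + 1 = Fintype.card F := by
  classical
  have key : ∑ u : F, sqc (u ^ 2 - a) = Fintype.card F - 1 := by
    rw [← fiber_sum h2 ha, pair_count h2 ha]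
  -- split the sum
  set P := fun u : F => u ^ 2 - a = 0
  set Q := fun u : F => IsSquare (u ^ 2 - a)
  have hsplit : ∑ u : F, sqc (u ^ 2 - a)
      = ∑ u ∈ univ.filter P, sqc (u ^ 2 - a) + ∑ u ∈ univ.filter (fun u => ¬ P u), sqc (u ^ 2 - a) :=
    (sum_filter_add_sum_filter_not univ P _).symm
  have h1 : ∑ u ∈ univ.filter P, sqc (u ^ 2 - a) = 2 := by
    have : ∀ u ∈ univ.filter P, sqc (u ^ 2 - a) = 1 := by
      intro u hu
      simp only [mem_filter, P] at hu
      rw [hu.2, sqc_zero]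
    rw [sum_congr rfl this, sum_const, smul_eq_mul, mul_one]
    -- #(filter P univ) = sqc a = 2
    have : (univ.filter P) = (univ.filter fun y : F => y ^ 2 = a) := by
      apply filter_congr; intro u _; simp only [P]; constructor <;> intro h <;> linear_combination h
    rw [this, ← sqc, sqc_sq h2 ha hasq]
  have h2' : ∑ u ∈ univ.filter (fun u => ¬ P u), sqc (u ^ 2 - a)
      = 2 * #(univ.filter fun u : F => u ^ 2 - a ≠ 0 ∧ IsSquare (u ^ 2 - a)) := by
    have hsplit2 : ∑ u ∈ univ.filter (fun u => ¬ P u), sqc (u ^ 2 - a)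
        = ∑ u ∈ (univ.filter (fun u => ¬ P u)).filter Q, sqc (u ^ 2 - a)
          + ∑ u ∈ (univ.filter (fun u => ¬ P u)).filter (fun u => ¬ Q u), sqc (u ^ 2 - a) :=
      (sum_filter_add_sum_filter_not _ Q _).symm
    rw [hsplit2]
    have e1 : ∑ u ∈ (univ.filter (fun u => ¬ P u)).filter Q, sqc (u ^ 2 - a)
        = 2 * #((univ.filter (fun u => ¬ P u)).filter Q) := by
      rw [sum_congr rfl (fun u hu => ?_), sum_const, smul_eq_mul, mul_comm]
      simp only [mem_filter, P, Q] at hu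
      exact sqc_sq h2 hu.1.2 hu.2
    have e2 : ∑ u ∈ (univ.filter (fun u => ¬ P u)).filter (fun u => ¬ Q u), sqc (u ^ 2 - a) = 0 := by
      apply sum_eq_zero
      intro u hu
      simp only [mem_filter, P, Q] at hu
      exact sqc_ns hu.2
    rw [e1, e2, filter_filter]
    congr 1
  constructor
  · have : 2 * #(univ.filter fun u : F => u ^ 2 - a ≠ 0 ∧ IsSquare (u ^ 2 - a)) + 2
        = Fintype.card F - 1 := by rw [← key, hsplit, h1, h2']; omega
    have hq : 1 ≤ Fintype.card F := Fintype.card_pos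
    omega
  · -- partition univ into P / (¬P ∧ Q) / ¬Q
    have hpart : #(univ.filter P) + (#(univ.filter fun u : F => u ^ 2 - a ≠ 0 ∧ IsSquare (u ^ 2 - a))
        + #(univ.filter fun u : F => ¬ IsSquare (u ^ 2 - a))) = Fintype.card F := by
      rw [← card_univ (α := F),
        ← card_filter_add_card_filter_not (s := (univ : Finset F)) (p := P)]
      congr 1
      rw [← card_filter_add_card_filter_not (s := univ.filter fun u => ¬ P u) (p := Q),
        filter_filter, filter_filter]
      congr 1
      refine congrArg Finset.card ?_
      apply filter_congr
      intro u _
      simp only [P, Q]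
      constructor
      · intro h
        refine ⟨?_, h⟩
        intro h0
        exact h ⟨0, by rw [h0]; ring⟩
      · intro h; exact h.2
    have hPcard : #(univ.filter P) = 2 := by
      have : (univ.filter P) = (univ.filter fun y : F => y ^ 2 = a) := by
        apply filter_congr; intro u _; simp only [P]; constructor <;> intro h <;> linear_combination h
      rw [this, ← sqc, sqc_sq h2 ha hasq]
    have h3 : 2 * #(univ.filter fun u : F => u ^ 2 - a ≠ 0 ∧ IsSquare (u ^ 2 - a)) + 3 = Fintype.card F := by
      have : 2 * #(univ.filter fun u : F => u ^ 2 - a ≠ 0 ∧ IsSquare (u ^ 2 - a)) + 2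
          = Fintype.card F - 1 := by rw [← key, hsplit, h1, h2']; omega
      have hq : 1 ≤ Fintype.card F := Fintype.card_pos
      omega
    omega

lemma sqc_eq_zero_imp (h2 : (2:F) ≠ 0) {a : F} (h : sqc a = 0) : ¬ IsSquare a := by
  intro hs
  by_cases h0 : a = 0
  · rw [h0, sqc_zero] at h; omega
  · rw [sqc_sq h2 h0 hs] at h; omega

lemma main_omega (h2 : (2:F) ≠ 0) {c e f : F}
    (hc0 : c ≠ 0) (hc1 : c ≠ 1) (hcsq : IsSquare c)
    (hef : e ≠ f) (he0 : e ≠ 0) (hf0 : f ≠ 0)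
    (hDe0 : DDq c e ≠ 0) (hDesq : IsSquare (DDq c e))
    (hDf : ¬ IsSquare (DDq c f))
    (δ : F → ℕ)
    (hδ : ∀ b, δ b = if b = 0 then 1
        else sqc (DDq c b) + (if b = e then 1 else 0) + (if b = f then 1 else 0)) :
    #(univ.filter fun b : F => δ b = 0) * 2 + 3 = Fintype.card F ∧
    #(univ.filter fun b : F => δ b = 1) = 4 ∧
    #(univ.filter fun b : F => δ b = 2) * 2 + 7 = Fintype.card F ∧
    #(univ.filter fun b : F => δ b = 3) = 1 ∧
    ∀ i, 4 ≤ i → #(univ.filter fun b : F => δ b = i) = 0 := by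
  obtain ⟨r, hc⟩ := hcsq
  have hr0 : r ≠ 0 := by rintro rfl; rw [mul_zero] at hc; exact hc0 hc
  set s := 2 * r with hs
  have hs0 : s ≠ 0 := mul_ne_zero h2 hr0
  have hs2 : s ^ 2 = 4 * c := by rw [hs, hc]; ring
  set β₁ := c + 1 + s with hβ₁
  set β₂ := c + 1 - s with hβ₂
  have hDD : ∀ b : F, DDq c b = (b - (c + 1)) ^ 2 - 4 * c := fun b => by rw [DDq]; ring
  have hDf0 : DDq c f ≠ 0 := fun h => hDf (h ▸ ⟨0, by ring⟩)
  have hroot : ∀ b : F, DDq c b = 0 ↔ b = β₁ ∨ b = β₂ := by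
    intro b
    rw [hDD]
    constructor
    · intro h
      have hfac : (b - β₁) * (b - β₂) = 0 := by
        rw [hβ₁, hβ₂]; linear_combination h - hs2
      rcases mul_eq_zero.1 hfac with h | h
      · left; linear_combination h
      · right; linear_combination h
    · rintro (rfl | rfl)
      · rw [hβ₁]; linear_combination hs2
      · rw [hβ₂]; linear_combination hs2
  have hc1' : c - 1 ≠ 0 := fun h => hc1 (by linear_combination h)
  have hprod : β₁ * β₂ = (c - 1) ^ 2 := by rw [hβ₁, hβ₂]; linear_combination -hs2
  have hβ₁0 : β₁ ≠ 0 := by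
    intro h
    apply hc1'
    have : (c-1)^2 = 0 := by rw [← hprod, h, zero_mul]
    exact pow_eq_zero_iff (by norm_num) |>.1 this
  have hβ₂0 : β₂ ≠ 0 := by
    intro h
    apply hc1'
    have : (c-1)^2 = 0 := by rw [← hprod, h, mul_zero]
    exact pow_eq_zero_iff (by norm_num) |>.1 this
  have hβne : β₁ ≠ β₂ := by
    intro h
    apply hs0
    have : (2:F) * s = 0 := by rw [hβ₁, hβ₂] at h; linear_combination h
    rcases mul_eq_zero.1 this with h' | h'
    · exact absurd h' h2
    · exact h'
  have hβ₁e : β₁ ≠ e := fun h => hDe0 ((hroot e).2 (Or.inl h.symm))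
  have hβ₂e : β₂ ≠ e := fun h => hDe0 ((hroot e).2 (Or.inr h.symm))
  have hβ₁f : β₁ ≠ f := fun h => hDf0 ((hroot f).2 (Or.inl h.symm))
  have hβ₂f : β₂ ≠ f := fun h => hDf0 ((hroot f).2 (Or.inr h.symm))
  -- delta values
  have hδ0 : δ 0 = 1 := by rw [hδ, if_pos rfl]
  have hδe : δ e = 3 := by
    rw [hδ, if_neg he0, if_pos rfl, if_neg hef, sqc_sq h2 hDe0 hDesq]
  have hδf : δ f = 1 := by
    rw [hδ, if_neg hf0, if_neg (Ne.symm hef), if_pos rfl, sqc_ns hDf]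
  have hδβ : ∀ b : F, b = β₁ ∨ b = β₂ → δ b = 1 := by
    rintro b hb
    have hb0 : b ≠ 0 := by rcases hb with rfl | rfl <;> assumption
    have hbe : b ≠ e := by rcases hb with rfl | rfl <;> assumption
    have hbf : b ≠ f := by rcases hb with rfl | rfl <;> assumption
    rw [hδ, if_neg hb0, if_neg hbe, if_neg hbf, (hroot b).2 hb, sqc_zero]
  have hδgen : ∀ b : F, b ≠ 0 → b ≠ e → b ≠ f → δ b = sqc (DDq c b) := by
    intro b h0 he hf
    rw [hδ, if_neg h0, if_neg he, if_neg hf]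
    omega
  -- D at 0
  have hD0 : DDq c 0 = (c - 1)^2 := by rw [DDq]; ring
  have hD0ne : DDq c 0 ≠ 0 := by rw [hD0]; exact pow_ne_zero _ hc1'
  have hD0sq : IsSquare (DDq c 0) := ⟨c - 1, by rw [hD0]; ring⟩
  -- 4c
  have h4c0 : (4:F) * c ≠ 0 := by
    apply mul_ne_zero _ hc0
    intro h
    have : (2:F) * 2 = 0 := by linear_combination h
    rcases mul_eq_zero.1 this with h' | h' <;> exact h2 h'
  have h4csq : IsSquare ((4:F) * c) := ⟨2 * r, by rw [hc]; ring⟩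
  obtain ⟨hNp, hNm⟩ := count_squares h2 h4c0 h4csq
  -- transfer of counts from u to b
  have htranspos : #(univ.filter fun b : F => DDq c b ≠ 0 ∧ IsSquare (DDq c b))
      = #(univ.filter fun u : F => u ^ 2 - 4 * c ≠ 0 ∧ IsSquare (u ^ 2 - 4 * c)) := by
    apply card_nbij' (i := fun b => b - (c + 1)) (j := fun u => u + (c + 1))
    · intro b hb
      simp only [mem_coe, mem_filter, mem_univ, true_and] at hb ⊢
      rw [hDD] at hb
      exact hb
    · intro u hu
      simp only [mem_coe, mem_filter, mem_univ, true_and] at hu ⊢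
      rw [show DDq c (u + (c+1)) = u ^ 2 - 4 * c by rw [DDq]; ring]
      exact hu
    · intro b _; ring
    · intro u _; ring
  have htransneg : #(univ.filter fun b : F => ¬ IsSquare (DDq c b))
      = #(univ.filter fun u : F => ¬ IsSquare (u ^ 2 - 4 * c)) := by
    apply card_nbij' (i := fun b => b - (c + 1)) (j := fun u => u + (c + 1))
    · intro b hb
      simp only [mem_coe, mem_filter, mem_univ, true_and] at hb ⊢
      rw [hDD] at hb
      exact hb
    · intro u hu
      simp only [mem_coe, mem_filter, mem_univ, true_and] at hu ⊢
      rw [show DDq c (u + (c+1)) = u ^ 2 - 4 * c by rw [DDq]; ring]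
      exact hu
    · intro b _; ring
    · intro u _; ring
  refine ⟨?_, ?_, ?_, ?_, ?_⟩
  -- ω₀
  · have hset : (univ.filter fun b : F => ¬ IsSquare (DDq c b))
        = insert f (univ.filter fun b : F => δ b = 0) := by
      ext b
      simp only [mem_filter, mem_univ, true_and, mem_insert]
      constructor
      · intro hb
        rcases eq_or_ne b f with rfl | hbf
        · exact Or.inl rfl
        right
        rcases eq_or_ne b 0 with rfl | hb0
        · exact absurd hD0sq hb
        rcases eq_or_ne b e with rfl | hbe
        · exact absurd hDesq hb
        rw [hδgen b hb0 hbe hbf, sqc_ns hb]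
      · rintro (rfl | hb)
        · exact hDf
        · have hb0 : b ≠ 0 := by rintro rfl; rw [hδ0] at hb; omega
          have hbe : b ≠ e := by rintro rfl; rw [hδe] at hb; omega
          have hbf : b ≠ f := by rintro rfl; rw [hδf] at hb; omega
          rw [hδgen b hb0 hbe hbf] at hb
          exact sqc_eq_zero_imp h2 hb
    have hfnot : f ∉ (univ.filter fun b : F => δ b = 0) := by
      simp only [mem_filter, mem_univ, true_and, hδf]
      omega
    rw [hset, card_insert_of_notMem hfnot] at htransneg
    omega
  -- ω₁
  · have hset : (univ.filter fun b : F => δ b = 1) = {0, f, β₁, β₂} := by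
      ext b
      simp only [mem_filter, mem_univ, true_and, mem_insert, mem_singleton]
      constructor
      · intro hb
        rcases eq_or_ne b 0 with rfl | hb0
        · exact Or.inl rfl
        rcases eq_or_ne b f with rfl | hbf
        · exact Or.inr (Or.inl rfl)
        rcases eq_or_ne b e with rfl | hbe
        · rw [hδe] at hb; omega
        rw [hδgen b hb0 hbe hbf] at hb
        rcases (hroot b).1 ((sqc_eq_one_iff h2).1 hb) with h | h
        · exact Or.inr (Or.inr (Or.inl h))
        · exact Or.inr (Or.inr (Or.inr h))
      · rintro (rfl | rfl | rfl | rfl)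
        · exact hδ0
        · exact hδf
        · exact hδβ _ (Or.inl rfl)
        · exact hδβ _ (Or.inr rfl)
    rw [hset]
    rw [card_insert_of_notMem (by
        simp [Ne.symm hf0, Ne.symm hβ₁0, Ne.symm hβ₂0]),
      card_insert_of_notMem (by
        simp [Ne.symm hβ₁f, Ne.symm hβ₂f]),
      card_insert_of_notMem (by simp [hβne]),
      card_singleton]
  -- ω₂
  · have hset : (univ.filter fun b : F => DDq c b ≠ 0 ∧ IsSquare (DDq c b))
        = insert 0 (insert e (univ.filter fun b : F => δ b = 2)) := by
      ext b
      simp only [mem_filter, mem_univ, true_and, mem_insert]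
      constructor
      · rintro ⟨hne, hsq⟩
        rcases eq_or_ne b 0 with rfl | hb0
        · exact Or.inl rfl
        rcases eq_or_ne b e with rfl | hbe
        · exact Or.inr (Or.inl rfl)
        right; right
        rcases eq_or_ne b f with rfl | hbf
        · exact absurd hsq hDf
        rw [hδgen b hb0 hbe hbf, sqc_sq h2 hne hsq]
      · rintro (rfl | rfl | hb)
        · exact ⟨hD0ne, hD0sq⟩
        · exact ⟨hDe0, hDesq⟩
        · have hb0 : b ≠ 0 := by rintro rfl; rw [hδ0] at hb; omega
          have hbe : b ≠ e := by rintro rfl; rw [hδe] at hb; omega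
          have hbf : b ≠ f := by rintro rfl; rw [hδf] at hb; omega
          rw [hδgen b hb0 hbe hbf] at hb
          have hne : DDq c b ≠ 0 := by
            intro h; rw [h, sqc_zero] at hb; omega
          refine ⟨hne, ?_⟩
          by_contra hns
          rw [sqc_ns hns] at hb; omega
    have h0not : (0:F) ∉ insert e (univ.filter fun b : F => δ b = 2) := by
      simp only [mem_insert, mem_filter, mem_univ, true_and, hδ0]
      push_neg
      exact ⟨Ne.symm he0, by omega⟩
    have henot : e ∉ (univ.filter fun b : F => δ b = 2) := by
      simp only [mem_filter, mem_univ, true_and, hδe]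
      omega
    rw [hset, card_insert_of_notMem h0not, card_insert_of_notMem henot] at htranspos
    omega
  -- ω₃
  · have hset : (univ.filter fun b : F => δ b = 3) = {e} := by
      ext b
      simp only [mem_filter, mem_univ, true_and, mem_singleton]
      constructor
      · intro hb
        by_contra hbe
        rcases eq_or_ne b 0 with rfl | hb0
        · rw [hδ0] at hb; omega
        rcases eq_or_ne b f with rfl | hbf
        · rw [hδf] at hb; omega
        rw [hδgen b hb0 hbe hbf] at hb
        have := sqc_le_two h2 (DDq c b)
        omega
      · rintro rfl; exact hδe
    rw [hset, card_singleton]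
  -- ω_{≥4}
  · intro i hi
    rw [card_eq_zero, eq_empty_iff_forall_notMem]
    intro b hb
    simp only [mem_filter, mem_univ, true_and] at hb
    rcases eq_or_ne b 0 with rfl | hb0
    · rw [hδ0] at hb; omega
    rcases eq_or_ne b e with rfl | hbe
    · rw [hδe] at hb; omega
    rcases eq_or_ne b f with rfl | hbf
    · rw [hδf] at hb; omega
    rw [hδgen b hb0 hbe hbf] at hb
    have := sqc_le_two h2 (DDq c b)
    omega

end AuxAll

theorem stmt_8 (p n : ℕ) (hp : p.Prime) (hpodd : Odd p) (hn : 1 ≤ n)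
    (F : Type*) [Field F] [Fintype F] (hF : Fintype.card F = p ^ n)
    (c : F) (hc0 : c ≠ 0) (hc1 : c ≠ 1) (hc4 : c ≠ 4) (hc4i : c ≠ (4 : F)⁻¹)
    (h1 : chi F (c ^ 2 - 4 * c) * chi F (1 - 4 * c) = -1) (h3 : chi F c = 1) :
    comega F (p ^ n - 2) c 0 = (p ^ n - 3) / 2 ∧
    comega F (p ^ n - 2) c 1 = 4 ∧
    comega F (p ^ n - 2) c 2 = (p ^ n - 7) / 2 ∧
    comega F (p ^ n - 2) c 3 = 1 ∧
    ∀ i, 4 ≤ i → comega F (p ^ n - 2) c i = 0 := by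
  classical
  have hp3 : 3 ≤ p := by
    rcases hp.two_le.lt_or_eq with h | h
    · omega
    · exfalso; rw [← h] at hpodd; exact (Nat.not_odd_iff_even.2 (by decide)) hpodd
  have hq3 : 3 ≤ Fintype.card F := by
    rw [hF]
    calc 3 ≤ p := hp3
      _ ≤ p ^ n := Nat.le_self_pow (by omega) p
  have hqodd : Fintype.card F % 2 = 1 := by
    rw [hF]
    exact Nat.odd_iff.1 (hpodd.pow)
  -- 2 ≠ 0 in F
  have h2 : (2 : F) ≠ 0 := by
    intro h
    have hc2 : ringChar F ∣ 2 := (ringChar.spec F 2).mp (by exact_mod_cast h)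
    have hprime : (ringChar F).Prime := CharP.char_is_prime F (ringChar F)
    have hchar : ringChar F = 2 := by
      have := Nat.le_of_dvd (by norm_num) hc2
      have := hprime.two_le
      omega
    have := FiniteField.even_card_of_char_two hchar
    omega
  have h4 : (4 : F) ≠ 0 := by
    rw [show (4:F) = 2 * 2 by norm_num]
    exact mul_ne_zero h2 h2
  -- inverse power
  have hinv : ∀ x : F, x ^ (p ^ n - 2) = x⁻¹ := by
    intro x
    rcases eq_or_ne x 0 with rfl | hx
    · rw [inv_zero]
      exact zero_pow (by rw [hF] at hq3; omega)
    · have hone : x ^ (Fintype.card F - 1) = 1 := FiniteField.pow_card_sub_one_eq_one x hx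
      have hexp : p ^ n - 2 + 1 = Fintype.card F - 1 := by rw [hF] at hq3 ⊢; omega
      have hmul : x ^ (p ^ n - 2) * x = 1 := by
        rw [← pow_succ, hexp, hone]
      exact eq_inv_of_mul_eq_one_left hmul
  -- cdelta as a filter card
  have hcd : ∀ b : F, cdelta F (p ^ n - 2) c b
      = #(univ.filter fun x : F => (x + 1)⁻¹ - c * x⁻¹ = b) := by
    intro b
    rw [cdelta, Nat.card_eq_fintype_card, Fintype.card_subtype]
    congr 1
    apply filter_congr
    intro x _
    rw [hinv, hinv]
  -- comega as a filter card
  have hco : ∀ i : ℕ, comega F (p ^ n - 2) c i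
      = #(univ.filter fun b : F => cdelta F (p ^ n - 2) c b = i) := by
    intro i
    rw [comega, Nat.card_eq_fintype_card, Fintype.card_subtype]
  -- chi facts
  have hcsq : IsSquare c := by
    by_contra h
    unfold chi at h3
    rw [if_neg hc0, if_neg h] at h3
    norm_num at h3
  have hA0 : c ^ 2 - 4 * c ≠ 0 := by
    intro h
    have hfac : c * (c - 4) = 0 := by linear_combination h
    rcases mul_eq_zero.1 hfac with h' | h'
    · exact hc0 h'
    · exact hc4 (by linear_combination h')
  have hB0 : (1 : F) - 4 * c ≠ 0 := by
    intro h
    apply hc4i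
    have h41 : (4 : F) * c = 1 := by linear_combination -h
    field_simp
    linear_combination h41
  have hD1 : DDq c 1 = c ^ 2 - 4 * c := by rw [DDq]; ring
  have hDc : DDq c c = 1 - 4 * c := by rw [DDq]; ring
  -- the delta formula, with 1 and c as the special points
  have hδbase : ∀ b : F, cdelta F (p ^ n - 2) c b
      = if b = 0 then 1
        else sqc (DDq c b) + (if b = 1 then 1 else 0) + (if b = c then 1 else 0) := by
    intro b
    rw [hcd, delta_formula h2 hc0 hc1]
  unfold chi at h1
  rw [if_neg hA0, if_neg hB0] at h1
  have key :
      #(univ.filter fun b : F => cdelta F (p ^ n - 2) c b = 0) * 2 + 3 = Fintype.card F ∧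
      #(univ.filter fun b : F => cdelta F (p ^ n - 2) c b = 1) = 4 ∧
      #(univ.filter fun b : F => cdelta F (p ^ n - 2) c b = 2) * 2 + 7 = Fintype.card F ∧
      #(univ.filter fun b : F => cdelta F (p ^ n - 2) c b = 3) = 1 ∧
      ∀ i, 4 ≤ i → #(univ.filter fun b : F => cdelta F (p ^ n - 2) c b = i) = 0 := by
    by_cases hA : IsSquare (c ^ 2 - 4 * c)
    · rw [if_pos hA] at h1
      have hB : ¬ IsSquare (1 - 4 * c) := by
        intro hB
        rw [if_pos hB] at h1
        norm_num at h1
      refine main_omega h2 hc0 hc1 hcsq (Ne.symm hc1) one_ne_zero hc0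
        (by rw [hD1]; exact hA0) (by rw [hD1]; exact hA) (by rw [hDc]; exact hB)
        (fun b => cdelta F (p ^ n - 2) c b) ?_
      intro b
      exact hδbase b
    · rw [if_neg hA] at h1
      have hB : IsSquare (1 - 4 * c) := by
        by_contra hB
        rw [if_neg hB] at h1
        norm_num at h1
      refine main_omega h2 hc0 hc1 hcsq hc1 hc0 one_ne_zero
        (by rw [hDc]; exact hB0) (by rw [hDc]; exact hB) (by rw [hD1]; exact hA)
        (fun b => cdelta F (p ^ n - 2) c b) ?_
      intro b
      show cdelta F (p ^ n - 2) c b = _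
      rw [hδbase b]
      split_ifs <;> omega
  obtain ⟨k0, k1, k2, k3, k4⟩ := key
  rw [hF] at k0 k2 hqodd
  refine ⟨?_, ?_, ?_, ?_, ?_⟩
  · rw [hco 0]; omega
  · rw [hco 1]; exact k1
  · rw [hco 2]; omega
  · rw [hco 3]; exact k3
  · intro i hi
    rw [hco i]
    exact k4 i hi
end

section
/- Let p be an odd prime, n ≥ 1, q = p^n, and let F(x) = x^{q − 2} be the inverse power function over GF(q). Let c ∈ GF(q) with c ∉ {0, 1, 4, 4^{-1}}. If χ(c² − 4c) = 1, χ(1 − 4c) = 1, and χ(c) = −1, then the c-differential spectrum of F is given by ω_0 = (q + 1)/2, ω_1 = 1, ω_2 = (q − 7)/2, ω_3 = 2, and ω_i = 0 for i ≥ 4. -/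
open Finset

open scoped Classical

set_option linter.unusedSectionVars false

section Aux

variable {K : Type*} [Field K] [Fintype K]

theorem card_quad_two (h2 : (2:K) ≠ 0)
    {a b c s : K} (ha : a ≠ 0) (hs : discrim a b c = s * s) (hs0 : s ≠ 0) :
    (univ.filter fun x : K => a * (x * x) + b * x + c = 0).card = 2 := by
  haveI : NeZero (2:K) := ⟨h2⟩
  have hset : (univ.filter fun x : K => a * (x * x) + b * x + c = 0)
      = {(-b + s) / (2 * a), (-b - s) / (2 * a)} := by
    ext x
    simp [quadratic_eq_zero_iff ha hs x]
  rw [hset, card_pair]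
  intro h
  have h2a : (2 * a) ≠ 0 := mul_ne_zero h2 ha
  rw [div_eq_div_iff h2a h2a] at h
  have h3 := mul_right_cancel₀ h2a h
  have h4 : (2:K) * s = 0 := by linear_combination h3
  exact hs0 ((mul_eq_zero.mp h4).resolve_left h2)

theorem card_quad_zero {a b c : K} (h : ¬ IsSquare (discrim a b c)) :
    (univ.filter fun x : K => a * (x * x) + b * x + c = 0).card = 0 := by
  rw [card_eq_zero, filter_eq_empty_iff]
  intro x _
  exact quadratic_ne_zero_of_discrim_ne_sq (fun s hs => h ⟨s, by rw [hs]; ring⟩) x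

theorem inv_iff_quad (c b x : K) (hx : x ≠ 0) (hx1 : x + 1 ≠ 0) :
    ((x+1)⁻¹ - c * x⁻¹ = b ↔ b * (x*x) + (b + c - 1) * x + c = 0) := by
  constructor
  · intro h
    field_simp at h
    linear_combination -h
  · intro h
    field_simp
    linear_combination -h

theorem cdelta_eq_card (hq3 : 3 ≤ Fintype.card K) (c b : K) :
    cdelta K (Fintype.card K - 2) c b
      = (univ.filter fun x : K => (x+1)⁻¹ - c * x⁻¹ = b).card := by
  have hpow : ∀ x : K, x ^ (Fintype.card K - 2) = x⁻¹ := by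
    intro x
    by_cases hx : x = 0
    · subst hx; rw [zero_pow (by omega), inv_zero]
    · have h1 : x ^ (Fintype.card K - 1) = 1 := FiniteField.pow_card_sub_one_eq_one x hx
      have h2 : x ^ (Fintype.card K - 2) * x = 1 := by
        rw [← pow_succ, show Fintype.card K - 2 + 1 = Fintype.card K - 1 by omega, h1]
      exact eq_inv_of_mul_eq_one_left h2
  rw [cdelta, Nat.card_eq_fintype_card, Fintype.card_subtype]
  congr 1
  ext x
  simp only [mem_filter, hpow]

theorem comega_eq_card (d : ℕ) (c : K) (i : ℕ) :
    comega K d c i = (univ.filter fun b : K => cdelta K d c b = i).card := by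
  rw [comega, Nat.card_eq_fintype_card, Fintype.card_subtype]

theorem sum_cdelta (hq3 : 3 ≤ Fintype.card K) (c : K) :
    ∑ b : K, (univ.filter fun x : K => (x+1)⁻¹ - c * x⁻¹ = b).card = Fintype.card K := by
  rw [← card_univ]
  exact (card_eq_sum_card_fiberwise (f := fun x : K => (x+1)⁻¹ - c * x⁻¹)
    (fun x _ => mem_univ _)).symm

end Aux

section Main

variable {K : Type*} [Field K] [Fintype K] {c : K}

variable (h2 : (2:K) ≠ 0) (hc0 : c ≠ 0) (hc1 : c ≠ 1)
  (hA : IsSquare (c^2 - 4*c)) (hA0 : c^2 - 4*c ≠ 0)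
  (hB : IsSquare (1 - 4*c)) (hB0 : 1 - 4*c ≠ 0)
  (hcsq : ¬ IsSquare c)

include hc0 hc1 in
theorem dd_zero : (univ.filter fun x : K => (x+1)⁻¹ - c * x⁻¹ = (0:K)).card = 1 := by
  have hc1' : (1:K) - c ≠ 0 := sub_ne_zero.mpr (Ne.symm hc1)
  have hset : (univ.filter fun x : K => (x+1)⁻¹ - c * x⁻¹ = (0:K)) = {c / (1 - c)} := by
    ext x
    simp only [mem_filter, mem_univ, true_and, mem_singleton]
    by_cases hx : x = 0
    · subst hx
      simp only [inv_zero, mul_zero, zero_add, inv_one, sub_zero]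
      constructor
      · intro h; exact absurd h one_ne_zero
      · intro h
        exfalso
        apply hc0
        have h' := h.symm
        rw [div_eq_iff hc1'] at h'
        simpa using h'
    · by_cases hx1 : x + 1 = 0
      · have hxm : x = -1 := eq_neg_of_add_eq_zero_left hx1
        subst hxm
        constructor
        · intro h
          exact absurd (by simpa using h) hc0
        · intro h
          rw [eq_div_iff hc1'] at h
          exact absurd (by linear_combination -h : (1:K) = 0) one_ne_zero
      · rw [inv_iff_quad c 0 x hx hx1]
        constructor
        · intro h
          rw [eq_div_iff hc1']
          linear_combination -h
        · intro h
          rw [eq_div_iff hc1'] at h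
          linear_combination -h
  rw [hset, card_singleton]

include h2 hc0 hc1 hA hA0 in
theorem dd_one : (univ.filter fun x : K => (x+1)⁻¹ - c * x⁻¹ = (1:K)).card = 3 := by
  obtain ⟨s, hs⟩ := hA
  have hs0 : s ≠ 0 := by
    intro h; apply hA0; rw [hs, h, mul_zero]
  have hdisc : discrim (1:K) (1 + c - 1) c = s * s := by
    rw [discrim, ← hs]; ring
  have hset : (univ.filter fun x : K => (x+1)⁻¹ - c * x⁻¹ = (1:K))
      = insert 0 (univ.filter fun x : K => 1 * (x*x) + (1 + c - 1) * x + c = 0) := by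
    ext x
    simp only [mem_filter, mem_univ, true_and, mem_insert]
    by_cases hx : x = 0
    · subst hx
      simp
    · by_cases hx1 : x + 1 = 0
      · have hxm : x = -1 := eq_neg_of_add_eq_zero_left hx1
        subst hxm
        constructor
        · intro h
          have h' : c = 1 := by simpa [inv_neg_one] using h
          exact absurd h' hc1
        · rintro (h | h)
          · exact absurd h (by norm_num)
          · exact absurd (by linear_combination h : (1:K) = 0) one_ne_zero
      · rw [inv_iff_quad c 1 x hx hx1]
        simp [hx]
  rw [hset, card_insert_of_notMem, card_quad_two h2 one_ne_zero hdisc hs0]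
  simp [hc0]

include h2 hc0 hc1 hB hB0 in
theorem dd_c : (univ.filter fun x : K => (x+1)⁻¹ - c * x⁻¹ = c).card = 3 := by
  obtain ⟨s, hs⟩ := hB
  have hs0 : s ≠ 0 := by
    intro h; apply hB0; rw [hs, h, mul_zero]
  have hdisc : discrim c (c + c - 1) c = s * s := by
    rw [discrim, ← hs]; ring
  have hset : (univ.filter fun x : K => (x+1)⁻¹ - c * x⁻¹ = c)
      = insert (-1) (univ.filter fun x : K => c * (x*x) + (c + c - 1) * x + c = 0) := by
    ext x
    simp only [mem_filter, mem_univ, true_and, mem_insert]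
    by_cases hx : x = 0
    · subst hx
      constructor
      · intro h
        exact absurd (by simpa using h) (Ne.symm hc1)
      · rintro (h | h)
        · exact absurd h.symm (by norm_num)
        · exact absurd (by simpa using h) hc0
    · by_cases hx1 : x + 1 = 0
      · have hxm : x = -1 := eq_neg_of_add_eq_zero_left hx1
        subst hxm
        simp [inv_neg_one]
      · rw [inv_iff_quad c c x hx hx1]
        have : x ≠ -1 := fun h => hx1 (by rw [h]; ring)
        simp [this]
  rw [hset, card_insert_of_notMem, card_quad_two h2 hc0 hdisc hs0]
  intro h
  rw [mem_filter] at h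
  exact absurd (by linear_combination h.2 : (1:K) = 0) one_ne_zero

include h2 hc0 hc1 hcsq in
theorem dd_generic (b : K) (hb0 : b ≠ 0) (hb1 : b ≠ 1) (hbc : b ≠ c) :
    (univ.filter fun x : K => (x+1)⁻¹ - c * x⁻¹ = b).card = 0 ∨
    (univ.filter fun x : K => (x+1)⁻¹ - c * x⁻¹ = b).card = 2 := by
  have hset : (univ.filter fun x : K => (x+1)⁻¹ - c * x⁻¹ = b)
      = (univ.filter fun x : K => b * (x*x) + (b + c - 1) * x + c = 0) := by
    ext x
    simp only [mem_filter, mem_univ, true_and]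
    by_cases hx : x = 0
    · subst hx
      constructor
      · intro h
        have h' : (1:K) = b := by simpa using h
        exact absurd h'.symm hb1
      · intro h
        have h' : c = 0 := by simpa using h
        exact absurd h' hc0
    · by_cases hx1 : x + 1 = 0
      · have hxm : x = -1 := eq_neg_of_add_eq_zero_left hx1
        subst hxm
        constructor
        · intro h
          have h' : c = b := by simpa [inv_neg_one] using h
          exact absurd h'.symm hbc
        · intro h
          exact absurd (by linear_combination h : (1:K) = 0) one_ne_zero
      · exact inv_iff_quad c b x hx hx1
  rw [hset]
  have hD0 : discrim b (b + c - 1) c ≠ 0 := by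
    intro hD
    apply hcsq
    refine ⟨(b - c - 1) / 2, ?_⟩
    rw [div_mul_div_comm, eq_div_iff (mul_ne_zero h2 h2)]
    rw [discrim] at hD
    linear_combination -hD
  by_cases hsq : IsSquare (discrim b (b + c - 1) c)
  · right
    obtain ⟨s, hs⟩ := hsq
    have hs0 : s ≠ 0 := by
      intro h; apply hD0; rw [hs, h, mul_zero]
    exact card_quad_two h2 hb0 hs hs0
  · left
    exact card_quad_zero hsq

end Main

theorem stmt_9 (p n : ℕ) (hp : p.Prime) (hpodd : Odd p) (hn : 1 ≤ n)
    (F : Type*) [Field F] [Fintype F] (hF : Fintype.card F = p ^ n)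
    (c : F) (hc0 : c ≠ 0) (hc1 : c ≠ 1) (hc4 : c ≠ 4) (hc4i : c ≠ (4 : F)⁻¹)
    (h1 : chi F (c ^ 2 - 4 * c) = 1) (h2 : chi F (1 - 4 * c) = 1) (h3 : chi F c = -1) :
    comega F (p ^ n - 2) c 0 = (p ^ n + 1) / 2 ∧
    comega F (p ^ n - 2) c 1 = 1 ∧
    comega F (p ^ n - 2) c 2 = (p ^ n - 7) / 2 ∧
    comega F (p ^ n - 2) c 3 = 2 ∧
    ∀ i, 4 ≤ i → comega F (p ^ n - 2) c i = 0 := by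
  have hp3 : 3 ≤ p := by
    rcases hpodd with ⟨k, hk⟩
    have := hp.two_le
    omega
  have hq3 : 3 ≤ Fintype.card F := by
    rw [hF]
    calc (3:ℕ) = 3 ^ 1 := (pow_one 3).symm
      _ ≤ p ^ 1 := Nat.pow_le_pow_left hp3 1
      _ ≤ p ^ n := Nat.pow_le_pow_right (by omega) hn
  have hqodd : Fintype.card F % 2 = 1 := by
    rw [hF]
    exact Nat.odd_iff.mp (Odd.pow hpodd)
  have htwo : (2 : F) ≠ 0 := by
    intro h
    have hd : ringChar F ∣ 2 := ringChar.dvd (by exact_mod_cast h)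
    have hchar : ringChar F = 2 :=
      ((Nat.dvd_prime Nat.prime_two).mp hd).resolve_left CharP.ringChar_ne_one
    have := FiniteField.even_card_iff_char_two.mp hchar
    omega
  have hA0 : c ^ 2 - 4 * c ≠ 0 := by intro h; simp [chi, h] at h1
  have hA : IsSquare (c ^ 2 - 4 * c) := by by_contra h; simp [chi, hA0, h] at h1
  have hB0 : (1:F) - 4 * c ≠ 0 := by intro h; simp [chi, h] at h2
  have hB : IsSquare ((1:F) - 4 * c) := by by_contra h; simp [chi, hB0, h] at h2
  have hcsq : ¬ IsSquare c := by intro h; simp [chi, hc0, h] at h3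
  rw [← hF]
  have hδ : ∀ b : F, cdelta F (Fintype.card F - 2) c b
      = (univ.filter fun x : F => (x+1)⁻¹ - c * x⁻¹ = b).card :=
    fun b => cdelta_eq_card hq3 c b
  have d0 : cdelta F (Fintype.card F - 2) c 0 = 1 := by rw [hδ]; exact dd_zero hc0 hc1
  have d1 : cdelta F (Fintype.card F - 2) c 1 = 3 := by
    rw [hδ]; exact dd_one htwo hc0 hc1 hA hA0
  have dc : cdelta F (Fintype.card F - 2) c c = 3 := by
    rw [hδ]; exact dd_c htwo hc0 hc1 hB hB0
  have dgen : ∀ b : F, b ≠ 0 → b ≠ 1 → b ≠ c →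
      cdelta F (Fintype.card F - 2) c b = 0 ∨ cdelta F (Fintype.card F - 2) c b = 2 := by
    intro b hb0 hb1 hbc
    rw [hδ]
    exact dd_generic htwo hc0 hc1 hcsq b hb0 hb1 hbc
  have hsum : ∑ b : F, cdelta F (Fintype.card F - 2) c b = Fintype.card F := by
    simp_rw [hδ]
    exact sum_cdelta hq3 c
  have h1c : (1:F) ≠ c := Ne.symm hc1
  have h0m : (0:F) ∉ ({1, c} : Finset F) := by
    intro h
    rcases mem_insert.mp h with h | h
    · exact zero_ne_one h
    · exact hc0 (mem_singleton.mp h).symm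
  have h1m : (1:F) ∉ ({c} : Finset F) := by
    intro h
    exact h1c (mem_singleton.mp h)
  have hcardA : ({0, 1, c} : Finset F).card = 3 := by
    rw [card_insert_of_notMem h0m, card_insert_of_notMem h1m, card_singleton]
  have hcardT : (univ \ ({0, 1, c} : Finset F)).card = Fintype.card F - 3 := by
    rw [card_sdiff_of_subset (subset_univ _), card_univ, hcardA]
  have hmemT : ∀ b : F, b ∈ univ \ ({0, 1, c} : Finset F) → b ≠ 0 ∧ b ≠ 1 ∧ b ≠ c := by
    intro b hb
    rw [mem_sdiff] at hb
    have h' := hb.2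
    simp only [mem_insert, mem_singleton] at h'
    push_neg at h'
    exact h'
  have hdval : ∀ b : F, b ∈ univ \ ({0, 1, c} : Finset F) →
      cdelta F (Fintype.card F - 2) c b = 0 ∨ cdelta F (Fintype.card F - 2) c b = 2 := by
    intro b hb
    obtain ⟨e0, e1, ec⟩ := hmemT b hb
    exact dgen b e0 e1 ec
  have hsplit : ∑ b ∈ univ \ ({0, 1, c} : Finset F), cdelta F (Fintype.card F - 2) c b
      + ∑ b ∈ ({0, 1, c} : Finset F), cdelta F (Fintype.card F - 2) c b = Fintype.card F := by
    rw [sum_sdiff (subset_univ _)]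
    exact hsum
  have hsumA : ∑ b ∈ ({0, 1, c} : Finset F), cdelta F (Fintype.card F - 2) c b = 7 := by
    rw [sum_insert h0m, sum_insert h1m, sum_singleton, d0, d1, dc]
    norm_num
  have hsumT : ∑ b ∈ univ \ ({0, 1, c} : Finset F), cdelta F (Fintype.card F - 2) c b
      = 2 * ((univ \ ({0, 1, c} : Finset F)).filter
          fun b => cdelta F (Fintype.card F - 2) c b = 2).card := by
    rw [← sum_filter_add_sum_filter_not (univ \ ({0, 1, c} : Finset F))
      (fun b => cdelta F (Fintype.card F - 2) c b = 2)]
    have e1 : ∑ b ∈ (univ \ ({0, 1, c} : Finset F)).filter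
        (fun b => cdelta F (Fintype.card F - 2) c b = 2), cdelta F (Fintype.card F - 2) c b
        = 2 * ((univ \ ({0, 1, c} : Finset F)).filter
          fun b => cdelta F (Fintype.card F - 2) c b = 2).card := by
      rw [sum_congr rfl (fun b hb => (mem_filter.mp hb).2), sum_const, smul_eq_mul, mul_comm]
    have e2 : ∑ b ∈ (univ \ ({0, 1, c} : Finset F)).filter
        (fun b => ¬ cdelta F (Fintype.card F - 2) c b = 2), cdelta F (Fintype.card F - 2) c b
        = 0 := by
      apply sum_eq_zero
      intro b hb
      rcases hdval b (mem_filter.mp hb).1 with h | h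
      · exact h
      · exact absurd h (mem_filter.mp hb).2
    rw [e1, e2, add_zero]
  have hcard2 : 2 * ((univ \ ({0, 1, c} : Finset F)).filter
      fun b => cdelta F (Fintype.card F - 2) c b = 2).card + 7 = Fintype.card F := by
    rw [hsumT, hsumA] at hsplit
    omega
  have hnegfilter : (univ \ ({0, 1, c} : Finset F)).filter
      (fun b => ¬ cdelta F (Fintype.card F - 2) c b = 2)
      = (univ \ ({0, 1, c} : Finset F)).filter
      (fun b => cdelta F (Fintype.card F - 2) c b = 0) := by
    apply filter_congr
    intro b hb
    rcases hdval b hb with h | h <;> simp [h]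
  have hcard0 : ((univ \ ({0, 1, c} : Finset F)).filter
      fun b => cdelta F (Fintype.card F - 2) c b = 0).card
      + ((univ \ ({0, 1, c} : Finset F)).filter
      fun b => cdelta F (Fintype.card F - 2) c b = 2).card = Fintype.card F - 3 := by
    have h' := card_filter_add_card_filter_not (s := univ \ ({0, 1, c} : Finset F))
      (p := fun b => cdelta F (Fintype.card F - 2) c b = 2)
    rw [hnegfilter] at h'
    rw [← hcardT]
    omega
  have hw : ∀ i, comega F (Fintype.card F - 2) c i
      = (univ.filter fun b : F => cdelta F (Fintype.card F - 2) c b = i).card :=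
    fun i => comega_eq_card _ c i
  have hw1 : comega F (Fintype.card F - 2) c 1 = 1 := by
    rw [hw]
    have hset : (univ.filter fun b : F => cdelta F (Fintype.card F - 2) c b = 1) = {0} := by
      ext b
      simp only [mem_filter, mem_univ, true_and, mem_singleton]
      constructor
      · intro h
        by_contra hb0
        by_cases hb1 : b = 1
        · subst hb1; rw [d1] at h; omega
        · by_cases hbc : b = c
          · subst hbc; rw [dc] at h; omega
          · rcases dgen b hb0 hb1 hbc with h' | h' <;> omega
      · intro h; subst h; exact d0
    rw [hset, card_singleton]
  have hw3 : comega F (Fintype.card F - 2) c 3 = 2 := by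
    rw [hw]
    have hset : (univ.filter fun b : F => cdelta F (Fintype.card F - 2) c b = 3)
        = {1, c} := by
      ext b
      simp only [mem_filter, mem_univ, true_and, mem_insert, mem_singleton]
      constructor
      · intro h
        by_cases hb0 : b = 0
        · subst hb0; rw [d0] at h; omega
        · by_cases hb1 : b = 1
          · exact Or.inl hb1
          · by_cases hbc : b = c
            · exact Or.inr hbc
            · rcases dgen b hb0 hb1 hbc with h' | h' <;> omega
      · rintro (h | h)
        · subst h; exact d1
        · subst h; exact dc
    rw [hset, card_pair h1c]
  have hset2 : (univ.filter fun b : F => cdelta F (Fintype.card F - 2) c b = 2)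
      = (univ \ ({0, 1, c} : Finset F)).filter
        (fun b => cdelta F (Fintype.card F - 2) c b = 2) := by
    ext b
    simp only [mem_filter, mem_univ, true_and, mem_sdiff, mem_insert, mem_singleton]
    constructor
    · intro h
      refine ⟨?_, h⟩
      rintro (hb | hb | hb)
      · subst hb; rw [d0] at h; omega
      · subst hb; rw [d1] at h; omega
      · subst hb; rw [dc] at h; omega
    · exact fun h => h.2
  have hset0 : (univ.filter fun b : F => cdelta F (Fintype.card F - 2) c b = 0)
      = (univ \ ({0, 1, c} : Finset F)).filter
        (fun b => cdelta F (Fintype.card F - 2) c b = 0) := by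
    ext b
    simp only [mem_filter, mem_univ, true_and, mem_sdiff, mem_insert, mem_singleton]
    constructor
    · intro h
      refine ⟨?_, h⟩
      rintro (hb | hb | hb)
      · subst hb; rw [d0] at h; omega
      · subst hb; rw [d1] at h; omega
      · subst hb; rw [dc] at h; omega
    · exact fun h => h.2
  have hw2 : comega F (Fintype.card F - 2) c 2 = (Fintype.card F - 7) / 2 := by
    rw [hw, hset2]
    omega
  have hw0 : comega F (Fintype.card F - 2) c 0 = (Fintype.card F + 1) / 2 := by
    rw [hw, hset0]
    omega
  have hw4 : ∀ i, 4 ≤ i → comega F (Fintype.card F - 2) c i = 0 := by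
    intro i hi
    rw [hw, card_eq_zero, filter_eq_empty_iff]
    intro b _
    intro h
    by_cases hb0 : b = 0
    · subst hb0; rw [d0] at h; omega
    · by_cases hb1 : b = 1
      · subst hb1; rw [d1] at h; omega
      · by_cases hbc : b = c
        · subst hbc; rw [dc] at h; omega
        · rcases dgen b hb0 hb1 hbc with h' | h' <;> omega
  exact ⟨hw0, hw1, hw2, hw3, hw4⟩
end
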